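/- arXiv:2110.12306 — 5 statements merged into one kernel-verified Lean document; each statement's English description precedes it below -/
import Mathlib

section
/- Assume the finite discounted MDP setting with μ(s) > 0 for every s ∈ S. Let v* : S → ℝ and d* : S×A → ℝ with d* entrywise nonnegative form a saddle point of the Lagrangian L, i.e., L(v*, d) ≤ L(v*, d*) ≤ L(v, d*) for every v : S → ℝ and every entrywise-nonnegative d : S×A → ℝ. Then: (i) Σ_s μ(s) v*(s) equals the supremum over all stationary policies π of the discounted return J(π); (ii) Σ_a d*(s,a) > 0 for every s ∈ S, and the stationary policy π* defined by π*(a|s) = d*(s,a) / Σ_{a'} d*(s,a') satisfies J(π*) = sup_π J(π). -/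
noncomputable section

variable {S A : Type*}

/-- A stationary policy: a probability vector over actions for every state. -/
def IsPolicy [Fintype A] (π : S → A → ℝ) : Prop :=
  ∀ s, (∀ a, 0 ≤ π s a) ∧ ∑ a, π s a = 1

/-- The advantage function `A_v(s,a) = Σ_{s'} P(s'|s,a)(r(s,a,s') + γ v(s')) − v(s)`. -/
def adv [Fintype S] (P : S → A → S → ℝ) (r : S → A → S → ℝ) (γ : ℝ)
    (v : S → ℝ) (s : S) (a : A) : ℝ :=
  (∑ s', P s a s' * (r s a s' + γ * v s')) - v s

/-- The state transition matrix `P_π(s,s') = Σ_a π(a|s) P(s'|s,a)` induced by a policy. -/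
def Pmat [Fintype A] (P : S → A → S → ℝ) (π : S → A → ℝ) : Matrix S S ℝ :=
  Matrix.of fun s s' => ∑ a, π s a * P s a s'

/-- The expected one-step reward `r_π(s) = Σ_a π(a|s) Σ_{s'} P(s'|s,a) r(s,a,s')`. -/
def rvec [Fintype S] [Fintype A] (P : S → A → S → ℝ) (r : S → A → S → ℝ)
    (π : S → A → ℝ) (s : S) : ℝ :=
  ∑ a, π s a * ∑ s', P s a s' * r s a s'

/-- The value function `v^π = (I − γ P_π)^{-1} r_π` of a stationary policy. -/
def valueFn [Fintype S] [Fintype A] [DecidableEq S] (P : S → A → S → ℝ)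
    (r : S → A → S → ℝ) (γ : ℝ) (π : S → A → ℝ) : S → ℝ :=
  (1 - γ • Pmat P π)⁻¹.mulVec (rvec P r π)

/-- The discounted return `J(π) = Σ_s μ(s) v^π(s)`. -/
def Jret [Fintype S] [Fintype A] [DecidableEq S] (P : S → A → S → ℝ)
    (r : S → A → S → ℝ) (γ : ℝ) (μ : S → ℝ) (π : S → A → ℝ) : ℝ :=
  ∑ s, μ s * valueFn P r γ π s

/-- The Lagrangian `L(v,d) = Σ_s μ(s) v(s) + Σ_{(s,a)} d(s,a) A_v(s,a)`. -/
def Lagr [Fintype S] [Fintype A] (P : S → A → S → ℝ) (r : S → A → S → ℝ)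
    (γ : ℝ) (μ : S → ℝ) (v : S → ℝ) (d : S → A → ℝ) : ℝ :=
  (∑ s, μ s * v s) + ∑ s, ∑ a, d s a * adv P r γ v s a

section aux
variable [Fintype S] [Nonempty S] [DecidableEq S]
set_option linter.unusedSectionVars false

lemma le_zero_of_le_smul_mulVec (M : Matrix S S ℝ) (hMnn : ∀ s s', 0 ≤ M s s')
    (hMrow : ∀ s, ∑ s', M s s' = 1) (γ : ℝ) (hγ0 : 0 ≤ γ) (hγ1 : γ < 1)
    (w : S → ℝ) (hw : ∀ s, w s ≤ γ * M.mulVec w s) : ∀ s, w s ≤ 0 := by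
  obtain ⟨s₀, -, hs₀⟩ := Finset.exists_max_image Finset.univ w
    ⟨Classical.arbitrary S, Finset.mem_univ _⟩
  have hmax : ∀ s, w s ≤ w s₀ := fun s => hs₀ s (Finset.mem_univ s)
  have h1 : M.mulVec w s₀ ≤ w s₀ := by
    have h : M.mulVec w s₀ ≤ ∑ s', M s₀ s' * w s₀ :=
      Finset.sum_le_sum fun s' _ => mul_le_mul_of_nonneg_left (hmax s') (hMnn s₀ s')
    calc M.mulVec w s₀ ≤ ∑ s', M s₀ s' * w s₀ := h
      _ = w s₀ := by rw [← Finset.sum_mul, hMrow, one_mul]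
  have h2 : w s₀ ≤ γ * w s₀ :=
    le_trans (hw s₀) (mul_le_mul_of_nonneg_left h1 hγ0)
  have h3 : w s₀ ≤ 0 := by nlinarith
  exact fun s => le_trans (hmax s) h3

lemma one_sub_smul_mulVec (M : Matrix S S ℝ) (γ : ℝ) (v : S → ℝ) (s : S) :
    (1 - γ • M).mulVec v s = v s - γ * M.mulVec v s := by
  rw [Matrix.sub_mulVec, Matrix.smul_mulVec, Matrix.one_mulVec]
  simp

lemma isUnit_one_sub_smul (M : Matrix S S ℝ) (hMnn : ∀ s s', 0 ≤ M s s')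
    (hMrow : ∀ s, ∑ s', M s s' = 1) (γ : ℝ) (hγ0 : 0 ≤ γ) (hγ1 : γ < 1) :
    IsUnit (1 - γ • M) := by
  rw [← Matrix.mulVec_injective_iff_isUnit]
  intro x y hxy
  have hker : (1 - γ • M).mulVec (x - y) = 0 := by
    rw [Matrix.mulVec_sub, hxy, sub_self]
  set w := x - y with hwdef
  have hw' : ∀ s, w s = γ * M.mulVec w s := by
    intro s
    have := congrFun hker s
    rw [one_sub_smul_mulVec] at this
    simp only [Pi.zero_apply] at this
    linarith
  have h1 := le_zero_of_le_smul_mulVec M hMnn hMrow γ hγ0 hγ1 w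
    (fun s => (hw' s).le)
  have h2 := le_zero_of_le_smul_mulVec M hMnn hMrow γ hγ0 hγ1 (-w)
    (by intro s; rw [Matrix.mulVec_neg]; simp only [Pi.neg_apply]; linarith [hw' s])
  have : w = 0 := funext fun s => by
    have h2s := h2 s; simp only [Pi.neg_apply] at h2s
    have h1s := h1 s
    simp only [Pi.zero_apply]; linarith
  exact sub_eq_zero.mp (hwdef ▸ this)

end aux

section aux2
variable [Fintype S] [Fintype A] [Nonempty S] [Nonempty A] [DecidableEq S]
set_option linter.unusedSectionVars false

lemma Pmat_nonneg (P : S → A → S → ℝ) (hP : ∀ s a, (∀ s', 0 ≤ P s a s') ∧ ∑ s', P s a s' = 1)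
    (π : S → A → ℝ) (hπ : IsPolicy π) : ∀ s s', 0 ≤ Pmat P π s s' := by
  intro s s'
  exact Finset.sum_nonneg fun a _ => mul_nonneg ((hπ s).1 a) ((hP s a).1 s')

lemma Pmat_row (P : S → A → S → ℝ) (hP : ∀ s a, (∀ s', 0 ≤ P s a s') ∧ ∑ s', P s a s' = 1)
    (π : S → A → ℝ) (hπ : IsPolicy π) : ∀ s, ∑ s', Pmat P π s s' = 1 := by
  intro s
  rw [show ∑ s', Pmat P π s s' = ∑ s', ∑ a, π s a * P s a s' from rfl, Finset.sum_comm]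
  have : ∀ a, ∑ s', π s a * P s a s' = π s a := by
    intro a
    rw [← Finset.mul_sum, (hP s a).2, mul_one]
  rw [Finset.sum_congr rfl fun a _ => this a, (hπ s).2]

lemma sum_adv_eq (P : S → A → S → ℝ) (r : S → A → S → ℝ) (γ : ℝ)
    (π : S → A → ℝ) (v : S → ℝ) (s : S) (hsum : ∑ a, π s a = 1) :
    ∑ a, π s a * adv P r γ v s a
      = rvec P r π s + γ * (Pmat P π).mulVec v s - v s := by
  have key : ∀ a, π s a * adv P r γ v s a
      = π s a * ∑ s', P s a s' * r s a s'
        + γ * ∑ s', π s a * P s a s' * v s' - π s a * v s := by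
    intro a
    unfold adv
    rw [mul_sub]
    congr 1
    rw [Finset.mul_sum, Finset.mul_sum, Finset.mul_sum, ← Finset.sum_add_distrib]
    exact Finset.sum_congr rfl fun s' _ => by ring
  rw [Finset.sum_congr rfl fun a _ => key a, Finset.sum_sub_distrib,
    Finset.sum_add_distrib, ← Finset.sum_mul, hsum, one_mul]
  congr 1
  congr 1
  rw [← Finset.mul_sum, Finset.sum_comm]
  congr 1
  show ∑ s', ∑ a, π s a * P s a s' * v s' = (Pmat P π).mulVec v s
  simp only [Matrix.mulVec, dotProduct, Pmat, Matrix.of_apply, Finset.sum_mul]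

lemma valueFn_spec (P : S → A → S → ℝ) (r : S → A → S → ℝ) (γ : ℝ)
    (π : S → A → ℝ) (hunit : IsUnit (1 - γ • Pmat P π)) :
    (1 - γ • Pmat P π).mulVec (valueFn P r γ π) = rvec P r π := by
  unfold valueFn
  rw [Matrix.mulVec_mulVec,
    Matrix.mul_nonsing_inv _ ((Matrix.isUnit_iff_isUnit_det _).mp hunit), Matrix.one_mulVec]

lemma valueFn_eq_of (P : S → A → S → ℝ) (r : S → A → S → ℝ) (γ : ℝ)
    (π : S → A → ℝ) (v : S → ℝ) (hunit : IsUnit (1 - γ • Pmat P π))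
    (h : (1 - γ • Pmat P π).mulVec v = rvec P r π) : valueFn P r γ π = v := by
  unfold valueFn
  rw [← h, Matrix.mulVec_mulVec,
    Matrix.nonsing_inv_mul _ ((Matrix.isUnit_iff_isUnit_det _).mp hunit), Matrix.one_mulVec]

lemma valueFn_le (P : S → A → S → ℝ) (hP : ∀ s a, (∀ s', 0 ≤ P s a s') ∧ ∑ s', P s a s' = 1)
    (r : S → A → S → ℝ) (γ : ℝ) (hγ0 : 0 ≤ γ) (hγ1 : γ < 1)
    (π : S → A → ℝ) (hπ : IsPolicy π) (v : S → ℝ)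
    (hge : ∀ s, rvec P r π s ≤ (1 - γ • Pmat P π).mulVec v s) :
    ∀ s, valueFn P r γ π s ≤ v s := by
  have hMnn := Pmat_nonneg P hP π hπ
  have hMrow := Pmat_row P hP π hπ
  have hunit := isUnit_one_sub_smul (Pmat P π) hMnn hMrow γ hγ0 hγ1
  have hspec := valueFn_spec P r γ π hunit
  set w := valueFn P r γ π - v with hwdef
  have hw : ∀ s, w s ≤ γ * (Pmat P π).mulVec w s := by
    intro s
    have h1 : (1 - γ • Pmat P π).mulVec w s
        = rvec P r π s - (1 - γ • Pmat P π).mulVec v s := by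
      rw [hwdef, Matrix.mulVec_sub]
      simp only [Pi.sub_apply]
      rw [congrFun hspec s]
    have h2 := one_sub_smul_mulVec (Pmat P π) γ w s
    have h3 := hge s
    rw [h1] at h2
    linarith
  have := le_zero_of_le_smul_mulVec (Pmat P π) hMnn hMrow γ hγ0 hγ1 w hw
  intro s
  have := this s
  simp only [hwdef, Pi.sub_apply] at this
  linarith

end aux2

section aux3
variable [Fintype S] [Fintype A] [Nonempty S] [Nonempty A] [DecidableEq S]
set_option linter.unusedSectionVars false

lemma adv_update (P : S → A → S → ℝ) (r : S → A → S → ℝ) (γ : ℝ) (v : S → ℝ)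
    (t : ℝ) (s₀ : S) (s : S) (a : A) :
    adv P r γ (fun s' => v s' + t * (if s' = s₀ then 1 else 0)) s a
      = adv P r γ v s a + t * (γ * P s a s₀ - (if s = s₀ then 1 else 0)) := by
  unfold adv
  have h : ∀ s', P s a s' * (r s a s' + γ * (v s' + t * (if s' = s₀ then 1 else 0)))
      = P s a s' * (r s a s' + γ * v s') + γ * t * (if s' = s₀ then P s a s' else 0) := by
    intro s'; split <;> ring
  rw [Finset.sum_congr rfl fun s' _ => h s', Finset.sum_add_distrib, ← Finset.mul_sum,
    Finset.sum_ite_eq' Finset.univ s₀ (P s a)]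
  simp only [Finset.mem_univ, if_true]
  ring

end aux3

/-- **Proposition 2.** A saddle point `(v*, d*)` of the MDP Lagrangian gives the
optimal return `Σ_s μ(s) v*(s) = sup_π J(π)`, the state-marginals of `d*` are positive, and the
policy `π*(a|s) = d*(s,a)/Σ_{a'} d*(s,a')` is optimal. -/
theorem saddle_point_solves_mdp
    [Fintype S] [Fintype A] [Nonempty S] [Nonempty A] [DecidableEq S]
    (P : S → A → S → ℝ)
    (hP : ∀ s a, (∀ s', 0 ≤ P s a s') ∧ ∑ s', P s a s' = 1)
    (r : S → A → S → ℝ) (γ : ℝ) (hγ : 0 < γ ∧ γ < 1)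
    (μ : S → ℝ) (hμpos : ∀ s, 0 < μ s) (hμsum : ∑ s, μ s = 1)
    (vstar : S → ℝ) (dstar : S → A → ℝ) (hdnn : ∀ s a, 0 ≤ dstar s a)
    (hsaddle₁ : ∀ d : S → A → ℝ, (∀ s a, 0 ≤ d s a) →
      Lagr P r γ μ vstar d ≤ Lagr P r γ μ vstar dstar)
    (hsaddle₂ : ∀ v : S → ℝ, Lagr P r γ μ vstar dstar ≤ Lagr P r γ μ v dstar) :
    (∑ s, μ s * vstar s = sSup {x : ℝ | ∃ π, IsPolicy π ∧ Jret P r γ μ π = x}) ∧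
    (∀ s, 0 < ∑ a, dstar s a) ∧
    Jret P r γ μ (fun s a => dstar s a / ∑ a', dstar s a') =
      sSup {x : ℝ | ∃ π, IsPolicy π ∧ Jret P r γ μ π = x} := by
  classical
  obtain ⟨hγ0, hγ1⟩ := hγ
  -- Step 1: advantage of vstar is nonpositive
  have hAle : ∀ s₁ a₁, adv P r γ vstar s₁ a₁ ≤ 0 := by
    intro s₁ a₁
    set d : S → A → ℝ :=
      fun s a => dstar s a + (if s = s₁ then (if a = a₁ then 1 else 0) else 0) with hd
    have hdnn' : ∀ s a, 0 ≤ d s a := by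
      intro s a
      apply add_nonneg (hdnn s a)
      split <;> [skip; norm_num] <;> split <;> norm_num
    have h := hsaddle₁ d hdnn'
    have hL : Lagr P r γ μ vstar d
        = Lagr P r γ μ vstar dstar + adv P r γ vstar s₁ a₁ := by
      unfold Lagr
      have hterm : ∀ s a, d s a * adv P r γ vstar s a
          = dstar s a * adv P r γ vstar s a
            + (if s = s₁ then (if a = a₁ then adv P r γ vstar s a else 0) else 0) := by
        intro s a
        simp only [hd]
        split
        · split <;> ring
        · ring
      rw [Finset.sum_congr rfl fun s _ => Finset.sum_congr rfl fun a _ => hterm s a]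
      simp only [Finset.sum_add_distrib]
      have h2 : (∑ s, ∑ a,
            if s = s₁ then (if a = a₁ then adv P r γ vstar s a else 0) else 0)
          = adv P r γ vstar s₁ a₁ := by
        have hin : ∀ s, (∑ a,
              if s = s₁ then (if a = a₁ then adv P r γ vstar s a else 0) else 0)
            = (if s = s₁ then adv P r γ vstar s a₁ else 0) := by
          intro s
          split
          · rw [Finset.sum_ite_eq' Finset.univ a₁ (fun a => adv P r γ vstar s a)]
            simp
          · simp
        rw [Finset.sum_congr rfl fun s _ => hin s,
          Finset.sum_ite_eq' Finset.univ s₁ (fun s => adv P r γ vstar s a₁)]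
        simp
      rw [h2]
      ring
    rw [hL] at h
    linarith
  -- Step 2: complementary slackness
  have hsum_nonneg : 0 ≤ ∑ s, ∑ a, dstar s a * adv P r γ vstar s a := by
    have h := hsaddle₁ (fun _ _ => 0) (fun _ _ => le_refl 0)
    unfold Lagr at h
    simp only [zero_mul, Finset.sum_const_zero, add_zero] at h
    linarith
  have hterm_nonpos : ∀ s ∈ (Finset.univ : Finset S),
      (∑ a, dstar s a * adv P r γ vstar s a) ≤ 0 :=
    fun s _ => Finset.sum_nonpos fun a _ => by nlinarith [hdnn s a, hAle s a]
  have htot : ∑ s, ∑ a, dstar s a * adv P r γ vstar s a = 0 :=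
    le_antisymm (Finset.sum_nonpos hterm_nonpos) hsum_nonneg
  have hcs : ∀ s a, dstar s a * adv P r γ vstar s a = 0 := by
    intro s a
    have hin := (Finset.sum_eq_zero_iff_of_nonpos hterm_nonpos).mp htot s (Finset.mem_univ s)
    exact (Finset.sum_eq_zero_iff_of_nonpos
      (fun a _ => by nlinarith [hdnn s a, hAle s a])).mp hin a (Finset.mem_univ a)
  -- Step 3: flow constraints
  have hflow : ∀ s₀, ∑ a, dstar s₀ a
      = μ s₀ + γ * ∑ s, ∑ a, dstar s a * P s a s₀ := by
    intro s₀
    have key : ∀ t : ℝ,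
        Lagr P r γ μ (fun s => vstar s + t * (if s = s₀ then 1 else 0)) dstar
        = Lagr P r γ μ vstar dstar
          + t * (μ s₀ + γ * (∑ s, ∑ a, dstar s a * P s a s₀) - ∑ a, dstar s₀ a) := by
      intro t
      unfold Lagr
      have hterm1 : ∑ s, μ s * (vstar s + t * (if s = s₀ then 1 else 0))
          = (∑ s, μ s * vstar s) + t * μ s₀ := by
        have h : ∀ s, μ s * (vstar s + t * (if s = s₀ then 1 else 0))
            = μ s * vstar s + (if s = s₀ then t * μ s else 0) := by
          intro s; split <;> ring
        rw [Finset.sum_congr rfl fun s _ => h s, Finset.sum_add_distrib,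
          Finset.sum_ite_eq' Finset.univ s₀ (fun s => t * μ s)]
        simp
      have hterm2 : ∑ s, ∑ a, dstar s a *
            adv P r γ (fun s' => vstar s' + t * (if s' = s₀ then 1 else 0)) s a
          = (∑ s, ∑ a, dstar s a * adv P r γ vstar s a)
            + (t * γ * (∑ s, ∑ a, dstar s a * P s a s₀) - t * ∑ a, dstar s₀ a) := by
        have h : ∀ s a, dstar s a *
              adv P r γ (fun s' => vstar s' + t * (if s' = s₀ then 1 else 0)) s a
            = dstar s a * adv P r γ vstar s a
              + (t * γ * (dstar s a * P s a s₀)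
                - (if s = s₀ then t * dstar s a else 0)) := by
          intro s a
          rw [adv_update]
          split <;> ring
        rw [Finset.sum_congr rfl fun s _ => Finset.sum_congr rfl fun a _ => h s a]
        simp only [Finset.sum_add_distrib, Finset.sum_sub_distrib, ← Finset.mul_sum]
        congr 2
        rw [Finset.sum_comm]
        rw [Finset.sum_congr rfl (fun a _ => by
          rw [Finset.sum_ite_eq' Finset.univ s₀ (fun s => t * dstar s a)] :
          ∀ a ∈ Finset.univ, _ = _)]
        simp [← Finset.mul_sum]
      rw [hterm1, hterm2]
      ring
    have h1 := hsaddle₂ (fun s => vstar s + (1 : ℝ) * (if s = s₀ then 1 else 0))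
    have h2 := hsaddle₂ (fun s => vstar s + (-1 : ℝ) * (if s = s₀ then 1 else 0))
    rw [key 1] at h1
    rw [key (-1)] at h2
    have : μ s₀ + γ * (∑ s, ∑ a, dstar s a * P s a s₀) - ∑ a, dstar s₀ a = 0 := by
      linarith
    linarith
  -- Step 4: positivity of marginals
  have hDpos : ∀ s, 0 < ∑ a, dstar s a := by
    intro s
    have h := hflow s
    have hnn : 0 ≤ ∑ s', ∑ a, dstar s' a * P s' a s :=
      Finset.sum_nonneg fun s' _ => Finset.sum_nonneg fun a _ =>
        mul_nonneg (hdnn s' a) ((hP s' a).1 s)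
    nlinarith [hμpos s]
  -- Step 5: the policy
  set πst : S → A → ℝ := fun s a => dstar s a / ∑ a', dstar s a' with hπst
  have hpolst : IsPolicy πst := by
    intro s
    refine ⟨fun a => div_nonneg (hdnn s a) (hDpos s).le, ?_⟩
    rw [hπst]
    simp only
    rw [← Finset.sum_div, div_self (ne_of_gt (hDpos s))]
  -- Step 6: value of the policy is vstar
  have hstar_sum : ∀ s, ∑ a, πst s a * adv P r γ vstar s a = 0 := by
    intro s
    apply Finset.sum_eq_zero
    intro a _
    rw [hπst]
    simp only
    rw [div_mul_eq_mul_div, hcs s a, zero_div]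
  have hMnnst := Pmat_nonneg P hP πst hpolst
  have hMrowst := Pmat_row P hP πst hpolst
  have hunitst := isUnit_one_sub_smul _ hMnnst hMrowst γ hγ0.le hγ1
  have heq : (1 - γ • Pmat P πst).mulVec vstar = rvec P r πst := by
    funext s
    have h := sum_adv_eq P r γ πst vstar s (hpolst s).2
    rw [hstar_sum s] at h
    rw [one_sub_smul_mulVec]
    linarith
  have hval : valueFn P r γ πst = vstar := valueFn_eq_of P r γ πst vstar hunitst heq
  have hJst : Jret P r γ μ πst = ∑ s, μ s * vstar s := by
    unfold Jret
    rw [hval]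
  -- Step 7: upper bound
  have hub : ∀ π, IsPolicy π → Jret P r γ μ π ≤ ∑ s, μ s * vstar s := by
    intro π hπ
    have hge : ∀ s, rvec P r π s ≤ (1 - γ • Pmat P π).mulVec vstar s := by
      intro s
      have h := sum_adv_eq P r γ π vstar s (hπ s).2
      have hle : ∑ a, π s a * adv P r γ vstar s a ≤ 0 :=
        Finset.sum_nonpos fun a _ => by nlinarith [(hπ s).1 a, hAle s a]
      rw [one_sub_smul_mulVec]
      linarith
    have hv := valueFn_le P hP r γ hγ0.le hγ1 π hπ vstar hge
    unfold Jret
    exact Finset.sum_le_sum fun s _ => mul_le_mul_of_nonneg_left (hv s) (hμpos s).le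
  -- Step 8: conclude
  have hmem : (∑ s, μ s * vstar s)
      ∈ {x : ℝ | ∃ π, IsPolicy π ∧ Jret P r γ μ π = x} := ⟨πst, hpolst, hJst⟩
  have hbdd : ∀ x ∈ {x : ℝ | ∃ π, IsPolicy π ∧ Jret P r γ μ π = x},
      x ≤ ∑ s, μ s * vstar s := by
    rintro x ⟨π, hπ, rfl⟩
    exact hub π hπ
  have hsup : sSup {x : ℝ | ∃ π, IsPolicy π ∧ Jret P r γ μ π = x}
      = ∑ s, μ s * vstar s :=
    le_antisymm (csSup_le ⟨_, hmem⟩ hbdd) (le_csSup ⟨_, hbdd⟩ hmem)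
  refine ⟨hsup.symm, hDpos, ?_⟩
  rw [hsup]
  exact hJst
end
end

section
/- Assume the finite discounted MDP setting. Let M ≥ 1, let w₀ ∈ ℝ^M, and let π : ℝ^M → (S → A → ℝ) be a parametric family such that π_w is a stationary policy for every w ∈ ℝ^M and, for every (s,a), the map w ↦ π_w(a|s) is Fréchet differentiable at w₀ with derivative D π(a|s) : ℝ^M → ℝ. For each w define the discounted state measure ρ_w(s) = Σ_j μ(j) ((I − γ P_{π_w})^{-1})(j,s). Fix v : S → ℝ and define L̃(w) = Σ_s μ(s) v(s) + Σ_{(s,a)} ρ_w(s) π_w(a|s) A_v(s,a). If v satisfies the Bellman equation for π_{w₀}, then L̃ is Fréchet differentiable at w₀ and its derivative is the linear map h ↦ Σ_{(s,a)} ρ_{w₀}(s) · (D π(a|s) h) · A_v(s,a). -/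
noncomputable section

variable {S A : Type*}

/-- The discounted state measure `ρ_π(s) = Σ_j μ(j) ((I − γ P_π)^{-1})(j,s)`. -/
def rho [Fintype S] [Fintype A] [DecidableEq S] (P : S → A → S → ℝ) (γ : ℝ)
    (μ : S → ℝ) (π : S → A → ℝ) (s : S) : ℝ :=
  ∑ j, μ j * (1 - γ • Pmat P π)⁻¹ j s

open Filter Asymptotics

/-- Product of a function continuous at `x` with a function differentiable at `x`
vanishing at `x` is differentiable at `x`. -/
lemma hasFDerivAt_mul_of_continuousAt' {E : Type*} [NormedAddCommGroup E] [NormedSpace ℝ E]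
    {g f : E → ℝ} {x : E} {Df : E →L[ℝ] ℝ}
    (hg : ContinuousAt g x) (hf : HasFDerivAt f Df x) (h0 : f x = 0) :
    HasFDerivAt (fun y => g y * f y) (g x • Df) x := by
  rw [hasFDerivAt_iff_isLittleO] at hf ⊢
  have hO : (fun y : E => g y) =O[nhds x] (fun _ => (1 : ℝ)) := hg.isBigO_one ℝ
  have h1 : (fun y => g y * (f y - f x - Df (y - x))) =o[nhds x] fun y => y - x := by
    have := hO.mul_isLittleO hf.norm_right
    simp only [one_mul] at this
    exact this.of_norm_right
  have hsmall : (fun y => g y - g x) =o[nhds x] (fun _ : E => (1 : ℝ)) := by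
    rw [isLittleO_one_iff]
    simpa using hg.sub_const (g x)
  have hDf : (fun y : E => Df (y - x)) =O[nhds x] fun y => y - x :=
    Df.isBigO_comp _ _
  have h2 : (fun y => (g y - g x) * Df (y - x)) =o[nhds x] fun y => y - x := by
    have := hsmall.mul_isBigO hDf.norm_right
    simp only [one_mul] at this
    exact this.of_norm_right
  have := h1.add h2
  refine this.congr_left fun y => ?_
  simp only [ContinuousLinearMap.smul_apply, smul_eq_mul, h0]
  ring

section Units
attribute [local instance] Matrix.linftyOpNormedAddCommGroup Matrix.linftyOpNormedRing

lemma isUnit_one_sub_smul_Pmat [Fintype S] [Fintype A] [Nonempty S] [Nonempty A] [DecidableEq S]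
    (P : S → A → S → ℝ) (hP : ∀ s a, (∀ s', 0 ≤ P s a s') ∧ ∑ s', P s a s' = 1)
    {γ : ℝ} (hγ : 0 < γ ∧ γ < 1) (π : S → A → ℝ) (hπ : IsPolicy π) :
    IsUnit ((1 : Matrix S S ℝ) - γ • Pmat P π) := by
  have hnn : ∀ s s', 0 ≤ Pmat P π s s' := fun s s' =>
    Finset.sum_nonneg fun a _ => mul_nonneg ((hπ s).1 a) ((hP s a).1 s')
  have hrow : ∀ s, ∑ s', Pmat P π s s' = 1 := by
    intro s
    simp only [Pmat, Matrix.of_apply]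
    rw [Finset.sum_comm]
    simp_rw [← Finset.mul_sum]
    simp [(fun a => (hP s a).2 : ∀ a, ∑ s', P s a s' = 1), (hπ s).2]
  have hnorm : ‖γ • Pmat P π‖ < 1 := by
    rw [Matrix.linfty_opNorm_def]
    have : ((Finset.univ : Finset S).sup fun i => ∑ j, ‖(γ • Pmat P π) i j‖₊) < 1 := by
      refine Finset.sup_lt_iff (by norm_num) |>.2 fun i _ => ?_
      have hcoe : ((∑ j, ‖(γ • Pmat P π) i j‖₊ : NNReal) : ℝ) = γ := by
        push_cast
        have : ∀ j, ‖(γ • Pmat P π) i j‖ = γ * Pmat P π i j := by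
          intro j
          rw [Matrix.smul_apply, smul_eq_mul, Real.norm_of_nonneg (mul_nonneg hγ.1.le (hnn i j))]
        simp_rw [this, ← Finset.mul_sum, hrow i, mul_one]
      have : (∑ j, ‖(γ • Pmat P π) i j‖₊ : NNReal) < (1 : NNReal) := by
        rw [← NNReal.coe_lt_coe, hcoe]; exact_mod_cast hγ.2
      exact this
    exact_mod_cast this
  haveI : CompleteSpace (Matrix S S ℝ) := Matrix.instCompleteSpace S S ℝ
  haveI : HasSummableGeomSeries (Matrix S S ℝ) :=
    @instHasSummableGeomSeriesOfCompleteSpace _ Matrix.linftyOpNormedRing this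
  exact (Units.oneSub _ hnorm).isUnit

end Units

/-- **Theorem 1, policy gradient.** If `v` satisfies the Bellman equation for
`π_{w₀}`, then `L̃(w) = Σ_s μ(s) v(s) + Σ_{(s,a)} ρ_w(s) π_w(a|s) A_v(s,a)` is Fréchet
differentiable at `w₀` with derivative `h ↦ Σ_{(s,a)} ρ_{w₀}(s) (Dπ(a|s) h) A_v(s,a)`. -/
theorem policy_gradient_of_approximate_lagrangian
    [Fintype S] [Fintype A] [Nonempty S] [Nonempty A] [DecidableEq S]
    (P : S → A → S → ℝ)
    (hP : ∀ s a, (∀ s', 0 ≤ P s a s') ∧ ∑ s', P s a s' = 1)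
    (r : S → A → S → ℝ) (γ : ℝ) (hγ : 0 < γ ∧ γ < 1)
    (μ : S → ℝ) (hμnn : ∀ s, 0 ≤ μ s) (hμsum : ∑ s, μ s = 1)
    (M : ℕ) (hM : 1 ≤ M) (w₀ : Fin M → ℝ)
    (π : (Fin M → ℝ) → S → A → ℝ) (hπ : ∀ w, IsPolicy (π w))
    (Dπ : S → A → ((Fin M → ℝ) →L[ℝ] ℝ))
    (hdiff : ∀ s a, HasFDerivAt (fun w => π w s a) (Dπ s a) w₀)
    (v : S → ℝ)
    (hBellman : ∀ s, v s = ∑ a, π w₀ s a * ∑ s', P s a s' * (r s a s' + γ * v s')) :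
    HasFDerivAt
      (fun w => (∑ s, μ s * v s) +
        ∑ s, ∑ a, rho P γ μ (π w) s * π w s a * adv P r γ v s a)
      (∑ s, ∑ a, (rho P γ μ (π w₀) s * adv P r γ v s a) • Dπ s a) w₀ := by
  -- the mean advantage under `π w`
  set f : (Fin M → ℝ) → S → ℝ := fun w s => ∑ a, π w s a * adv P r γ v s a with hf
  -- the mean advantage vanishes at `w₀` by the Bellman equation
  have hzero : ∀ s, f w₀ s = 0 := by
    intro s
    simp only [hf, adv, mul_sub]
    rw [Finset.sum_sub_distrib, ← Finset.sum_mul, (hπ w₀ s).2, one_mul, ← hBellman s, sub_self]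
  -- differentiability of the mean advantage
  have hDf : ∀ s, HasFDerivAt (fun w => f w s)
      (∑ a, adv P r γ v s a • Dπ s a) w₀ := by
    intro s
    refine HasFDerivAt.fun_sum fun a _ => ?_
    have h := (hdiff s a).const_smul (adv P r γ v s a)
    simpa [Pi.smul_def, smul_eq_mul, mul_comm] using h
  -- continuity of the matrix `1 - γ • P_{π w}` at `w₀`
  have hcontX : ContinuousAt (fun w => (1 : Matrix S S ℝ) - γ • Pmat P (π w)) w₀ := by
    refine continuousAt_pi.2 ?_
    intro i
    rw [continuousAt_pi]
    intro j
    have h1 : ContinuousAt (fun w => ∑ a, π w i a * P i a j) w₀ :=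
      (HasFDerivAt.fun_sum fun a _ => (hdiff i a).mul_const' (P i a j)).continuousAt
    have : (fun w => ((1 : Matrix S S ℝ) - γ • Pmat P (π w)) i j)
        = fun w => (1 : Matrix S S ℝ) i j - γ * ∑ a, π w i a * P i a j := by
      funext w
      simp [Matrix.sub_apply, Matrix.smul_apply, smul_eq_mul, Pmat]
    rw [this]
    exact continuousAt_const.sub (continuousAt_const.mul h1)
  -- the matrix `1 - γ • P_{π w₀}` is invertible
  have hunit : IsUnit ((1 : Matrix S S ℝ) - γ • Pmat P (π w₀)) :=
    isUnit_one_sub_smul_Pmat P hP hγ (π w₀) (hπ w₀)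
  have hdet : ((1 : Matrix S S ℝ) - γ • Pmat P (π w₀)).det ≠ 0 :=
    ((Matrix.isUnit_iff_isUnit_det _).1 hunit).ne_zero
  -- continuity of the inverse matrix, hence of `ρ`
  have hcontInv : ContinuousAt (fun w => ((1 : Matrix S S ℝ) - γ • Pmat P (π w))⁻¹) w₀ := by
    refine ContinuousAt.comp ?_ hcontX
    refine continuousAt_matrix_inv _ ?_
    rw [Ring.inverse_eq_inv']
    exact continuousAt_inv₀ hdet
  have hcontρ : ∀ s, ContinuousAt (fun w => rho P γ μ (π w) s) w₀ := by
    intro s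
    unfold rho
    refine tendsto_finset_sum _ fun j _ => ?_
    exact tendsto_const_nhds.mul
      ((continuous_apply s).continuousAt.comp ((continuous_apply j).continuousAt.comp hcontInv))
  -- differentiability of each summand
  have hprod : ∀ s, HasFDerivAt (fun w => rho P γ μ (π w) s * f w s)
      (rho P γ μ (π w₀) s • ∑ a, adv P r γ v s a • Dπ s a) w₀ := fun s =>
    hasFDerivAt_mul_of_continuousAt' (hcontρ s) (hDf s) (hzero s)
  have hsum : HasFDerivAt (fun w => (∑ s, μ s * v s) + ∑ s, rho P γ μ (π w) s * f w s)
      (∑ s, rho P γ μ (π w₀) s • ∑ a, adv P r γ v s a • Dπ s a) w₀ :=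
    (HasFDerivAt.fun_sum fun s _ => hprod s).const_add _
  -- rewrite the function and the derivative into the stated forms
  have hfun : (fun w => (∑ s, μ s * v s) +
        ∑ s, ∑ a, rho P γ μ (π w) s * π w s a * adv P r γ v s a)
      = fun w => (∑ s, μ s * v s) + ∑ s, rho P γ μ (π w) s * f w s := by
    funext w
    congr 1
    refine Finset.sum_congr rfl fun s _ => ?_
    rw [hf, Finset.mul_sum]
    exact Finset.sum_congr rfl fun a _ => mul_assoc _ _ _
  have hD : (∑ s, ∑ a, (rho P γ μ (π w₀) s * adv P r γ v s a) • Dπ s a)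
      = ∑ s, rho P γ μ (π w₀) s • ∑ a, adv P r γ v s a • Dπ s a := by
    refine Finset.sum_congr rfl fun s _ => ?_
    rw [Finset.smul_sum]
    exact Finset.sum_congr rfl fun a _ => (smul_smul _ _ _).symm
  rw [hfun, hD]
  exact hsum
end
end

section
/- Let N, M ≥ 1 and let C be an N×N real doubly stochastic matrix with trace C > 0 that is irreducible, i.e., for every pair of indices (k,l) there exists m ≥ 1 with (C^m)(k,l) > 0. Let (Ω, 𝒢, ℙ) be a probability space with a filtration (ℱ_i)_{i∈ℕ}. For each agent k ∈ {1,…,N} let (φ_{k,i})_{i∈ℕ} be ℝ^M-valued random vectors with φ_{k,i} ℱ_i-measurable, and let (F_{k,i+1})_{i∈ℕ} be ℝ^M-valued random vectors with F_{k,i+1} ℱ_{i+1}-measurable and square-integrable. Let g_{k,i} : ℝ^M → ℝ^M satisfy ‖g_{k,i}(x) − g_{k,i}(y)‖ ≤ L₁ ‖x − y‖ for all x, y and all k, i, with sup_{k,i} ‖g_{k,i}(0)‖ < ∞, and let (α_i)_{i≥1} be positive reals with Σ_i α_i = ∞ and Σ_i α_i² < ∞. Assume for all k and i: (a) φ_{k,i+1}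 = Σ_{l=1}^N C(l,k) · (φ_{l,i} − α_{i+1}(g_{l,i}(φ_{l,i}) + F_{l,i+1})); (b) E[‖F_{k,i+1}‖² | ℱ_i] ≤ L₂ (1 + ‖φ_{k,i}‖²) almost surely for a constant L₂; (c) sup_i ‖φ_{k,i}‖ < ∞ almost surely. Then for every agent k, almost surely φ_{k,i} − (1/N) Σ_{l=1}^N φ_{l,i} → 0 as i → ∞. -/
open MeasureTheory Filter

lemma le_of_sq_le_sq' {a b : ℝ} (ha : 0 ≤ a) (h : a ^ 2 ≤ b ^ 2) (hb : 0 ≤ b) : a ≤ b := by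
  calc a = Real.sqrt (a ^ 2) := (Real.sqrt_sq ha).symm
    _ ≤ Real.sqrt (b ^ 2) := Real.sqrt_le_sqrt h
    _ = b := Real.sqrt_sq hb

section mat
variable {N : ℕ} (D : Matrix (Fin N) (Fin N) ℝ)

lemma pow_entry_nonneg (hD : ∀ l k, 0 ≤ D l k) : ∀ m l k, 0 ≤ (D ^ m) l k := by
  intro m
  induction m with
  | zero => intro l k; simp [Matrix.one_apply]; split <;> norm_num
  | succ m ih =>
    intro l k
    rw [pow_succ, Matrix.mul_apply]
    exact Finset.sum_nonneg fun j _ => mul_nonneg (ih l j) (hD j k)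

lemma pow_row_sum (hD : ∀ l, ∑ k, D l k = 1) : ∀ m l, ∑ k, (D ^ m) l k = 1 := by
  intro m
  induction m with
  | zero => intro l; simp [Matrix.one_apply]
  | succ m ih =>
    intro l
    simp only [pow_succ, Matrix.mul_apply]
    rw [Finset.sum_comm]
    calc ∑ j, ∑ k, (D ^ m) l j * D j k = ∑ j, (D ^ m) l j * ∑ k, D j k := by
          simp [Finset.mul_sum]
      _ = 1 := by simp only [hD, mul_one]; exact ih l

lemma pow_col_sum (hD : ∀ k, ∑ l, D l k = 1) : ∀ m k, ∑ l, (D ^ m) l k = 1 := by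
  intro m
  induction m with
  | zero => intro k; simp [Matrix.one_apply]
  | succ m ih =>
    intro k
    simp only [pow_succ, Matrix.mul_apply]
    rw [Finset.sum_comm]
    calc ∑ j, ∑ l, (D ^ m) l j * D j k = ∑ j, (∑ l, (D ^ m) l j) * D j k := by
          simp [Finset.sum_mul]
      _ = 1 := by simp only [ih, one_mul]; exact hD k

lemma pow_entry_prod_le (hD : ∀ l k, 0 ≤ D l k) (a b : ℕ) (k j l : Fin N) :
    (D ^ a) k j * (D ^ b) j l ≤ (D ^ (a + b)) k l := by
  rw [pow_add, Matrix.mul_apply]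
  have := pow_entry_nonneg D hD
  exact Finset.single_le_sum (f := fun j' => (D ^ a) k j' * (D ^ b) j' l)
    (fun j' _ => mul_nonneg (this a k j') (this b j' l)) (Finset.mem_univ j)

lemma diag_pow_pos (hD : ∀ l k, 0 ≤ D l k) {k0 : Fin N} (h : 0 < D k0 k0) (t : ℕ) :
    0 < (D ^ t) k0 k0 := by
  induction t with
  | zero => simp [Matrix.one_apply]
  | succ t ih =>
    calc (0:ℝ) < (D ^ t) k0 k0 * (D ^ 1) k0 k0 := by
          simpa using mul_pos ih (by simpa using h)
      _ ≤ (D ^ (t + 1)) k0 k0 := pow_entry_prod_le D hD t 1 k0 k0 k0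

lemma primitive_of_irreducible (hN : 1 ≤ N) (hD : ∀ l k, 0 ≤ D l k)
    (hDtr : 0 < D.trace)
    (hirr : ∀ k l, ∃ m, 1 ≤ m ∧ 0 < (D ^ m) k l) :
    ∃ m, 1 ≤ m ∧ ∀ k l, 0 < (D ^ m) k l := by
  have hne : Nonempty (Fin N) := ⟨⟨0, hN⟩⟩
  obtain ⟨k0, hk0⟩ : ∃ k0, 0 < D k0 k0 := by
    by_contra h
    push_neg at h
    have : D.trace ≤ 0 := Finset.sum_nonpos fun k _ => h k
    linarith
  choose a ha1 hapos using fun k => hirr k k0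
  choose b hb1 hbpos using fun l => hirr k0 l
  set A := Finset.univ.sup a with hA
  set Bm := Finset.univ.sup b with hB
  refine ⟨A + Bm, ?_, ?_⟩
  · have : a ⟨0, hN⟩ ≤ A := Finset.le_sup (Finset.mem_univ _)
    have := ha1 ⟨0, hN⟩
    omega
  intro k l
  have hak : a k ≤ A := Finset.le_sup (Finset.mem_univ _)
  have hbl : b l ≤ Bm := Finset.le_sup (Finset.mem_univ _)
  have hsplit : A + Bm = a k + ((A - a k) + (Bm - b l)) + b l := by omega
  rw [hsplit]
  have h1 : 0 < (D ^ (a k)) k k0 * (D ^ ((A - a k) + (Bm - b l))) k0 k0 :=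
    mul_pos (hapos k) (diag_pow_pos D hD hk0 _)
  calc (0:ℝ) < ((D ^ (a k)) k k0 * (D ^ ((A - a k) + (Bm - b l))) k0 k0) * (D ^ (b l)) k0 l :=
        mul_pos h1 (hbpos l)
    _ ≤ (D ^ (a k + ((A - a k) + (Bm - b l)))) k k0 * (D ^ (b l)) k0 l := by
        apply mul_le_mul_of_nonneg_right (pow_entry_prod_le D hD _ _ _ _ _)
          (le_of_lt (hbpos l))
    _ ≤ (D ^ (a k + ((A - a k) + (Bm - b l)) + b l)) k l := pow_entry_prod_le D hD _ _ _ _ _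

end mat

section aux
variable {E : Type*} [NormedAddCommGroup E] [InnerProductSpace ℝ E] {n : ℕ}

lemma weighted_var_identity (w : Fin n → ℝ) (h1 : ∑ k, w k = 1) (x : Fin n → E) :
    ∑ k, w k * ‖x k - ∑ l, w l • x l‖ ^ 2
      = ∑ k, w k * ‖x k‖ ^ 2 - ‖∑ l, w l • x l‖ ^ 2 := by
  set s := ∑ l, w l • x l with hs
  have key : ∀ k, w k * ‖x k - s‖ ^ 2
      = w k * ‖x k‖ ^ 2 - 2 * (w k * inner ℝ (x k) s) + w k * ‖s‖ ^ 2 := by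
    intro k
    have := @norm_sub_sq_real E _ _ (x k) s
    rw [this]; ring
  rw [Finset.sum_congr rfl (fun k _ => key k)]
  rw [Finset.sum_add_distrib, Finset.sum_sub_distrib, ← Finset.mul_sum, ← Finset.sum_mul, h1]
  have hinner : ∑ k, w k * inner ℝ (x k) s = ‖s‖ ^ 2 := by
    have : inner ℝ s s = ∑ k, w k * inner ℝ (x k) s := by
      rw [hs, sum_inner]
      exact Finset.sum_congr rfl fun k _ => real_inner_smul_left (x k) s (w k)
    rw [← this, real_inner_self_eq_norm_sq]
  rw [hinner]; ring

lemma weighted_sq_le (w : Fin n → ℝ) (hw : ∀ k, 0 ≤ w k) (h1 : ∑ k, w k = 1)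
    (x : Fin n → E) : ‖∑ l, w l • x l‖ ^ 2 ≤ ∑ l, w l * ‖x l‖ ^ 2 := by
  have hid := weighted_var_identity w h1 x
  have h0 : (0:ℝ) ≤ ∑ k, w k * ‖x k - ∑ l, w l • x l‖ ^ 2 :=
    Finset.sum_nonneg fun k _ => mul_nonneg (hw k) (sq_nonneg _)
  linarith

end aux

section tmat
variable {E : Type*} [NormedAddCommGroup E] [InnerProductSpace ℝ E] {N : ℕ}

/-- The linear map on `(Fin N → E)` (with the `ℓ²` norm) induced by a matrix `D`,
acting as `x ↦ fun k => ∑ l, D l k • x l` (i.e. `Dᵀ`). -/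
def Tmat (D : Matrix (Fin N) (Fin N) ℝ) :
    PiLp 2 (fun _ : Fin N => E) →ₗ[ℝ] PiLp 2 (fun _ : Fin N => E) where
  toFun x := WithLp.toLp 2 (fun k => ∑ l, D l k • x l)
  map_add' x y := by
    ext k
    simp [smul_add, Finset.sum_add_distrib]
  map_smul' c x := by
    ext k
    simp [Finset.smul_sum, smul_comm c]

lemma Tmat_apply (D : Matrix (Fin N) (Fin N) ℝ) (x : PiLp 2 (fun _ : Fin N => E))
    (k : Fin N) : Tmat D x k = ∑ l, D l k • x l := rfl

lemma Tmat_comp (A B : Matrix (Fin N) (Fin N) ℝ) (x : PiLp 2 (fun _ : Fin N => E)) :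
    Tmat A (Tmat B x) = Tmat (B * A) x := by
  ext k
  simp only [Tmat_apply, Finset.smul_sum, Matrix.mul_apply, Finset.sum_smul]
  rw [Finset.sum_comm]
  congr 1; funext j; congr 1; funext l
  rw [smul_smul, mul_comm]

lemma Tmat_pow (D : Matrix (Fin N) (Fin N) ℝ) (m : ℕ) (x : PiLp 2 (fun _ : Fin N => E)) :
    ((Tmat D) ^ m) x = Tmat (D ^ m) x := by
  induction m with
  | zero =>
    ext k
    simp [Tmat_apply, Matrix.one_apply]
  | succ m ih =>
    have : ((Tmat D) ^ (m+1)) x = Tmat D (((Tmat D) ^ m) x) := by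
      rw [pow_succ']; rfl
    rw [this, ih, Tmat_comp, ← pow_succ]

lemma Tmat_norm_le (D : Matrix (Fin N) (Fin N) ℝ) (hnn : ∀ l k, 0 ≤ D l k)
    (hrow : ∀ l, ∑ k, D l k = 1) (hcol : ∀ k, ∑ l, D l k = 1)
    (x : PiLp 2 (fun _ : Fin N => E)) : ‖Tmat D x‖ ≤ ‖x‖ := by
  have hsq : ‖Tmat D x‖ ^ 2 ≤ ‖x‖ ^ 2 := by
    rw [PiLp.norm_sq_eq_of_L2, PiLp.norm_sq_eq_of_L2]
    calc ∑ k, ‖Tmat D x k‖ ^ 2 ≤ ∑ k, ∑ l, D l k * ‖x l‖ ^ 2 :=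
          Finset.sum_le_sum fun k _ =>
            weighted_sq_le (fun l => D l k) (fun l => hnn l k) (hcol k) x
      _ = ∑ l, (∑ k, D l k) * ‖x l‖ ^ 2 := by
          rw [Finset.sum_comm]; simp [Finset.sum_mul]
      _ = ∑ l, ‖x l‖ ^ 2 := by simp [hrow]
  calc ‖Tmat D x‖ = Real.sqrt (‖Tmat D x‖ ^ 2) := (Real.sqrt_sq (norm_nonneg _)).symm
    _ ≤ Real.sqrt (‖x‖ ^ 2) := Real.sqrt_le_sqrt hsq
    _ = ‖x‖ := Real.sqrt_sq (norm_nonneg _)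

lemma Tmat_norm_lt (hN : 1 ≤ N) (D : Matrix (Fin N) (Fin N) ℝ) (hpos : ∀ l k, 0 < D l k)
    (hrow : ∀ l, ∑ k, D l k = 1) (hcol : ∀ k, ∑ l, D l k = 1)
    (x : PiLp 2 (fun _ : Fin N => E)) (hx0 : ∑ k, x k = 0) (hxne : x ≠ 0) :
    ‖Tmat D x‖ < ‖x‖ := by
  rcases lt_or_ge ‖Tmat D x‖ ‖x‖ with h | h
  · exact h
  exfalso
  have hle := Tmat_norm_le D (fun l k => (hpos l k).le) hrow hcol x
  have heq : ‖Tmat D x‖ = ‖x‖ := le_antisymm hle h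
  -- squared version
  have heqsq : ∑ k, ‖Tmat D x k‖ ^ 2 = ∑ l, ‖x l‖ ^ 2 := by
    have h1 := PiLp.norm_sq_eq_of_L2 (fun _ : Fin N => E) (Tmat D x)
    have h2 := PiLp.norm_sq_eq_of_L2 (fun _ : Fin N => E) x
    rw [← h1, ← h2, heq]
  -- each per-column deficit is zero
  have hdef : ∀ k, (∑ l, D l k * ‖x l‖ ^ 2) - ‖Tmat D x k‖ ^ 2 = 0 := by
    have hsum : ∑ k, ((∑ l, D l k * ‖x l‖ ^ 2) - ‖Tmat D x k‖ ^ 2) = 0 := by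
      rw [Finset.sum_sub_distrib, heqsq, Finset.sum_comm]
      simp [← Finset.sum_mul, hrow]
    intro k
    have hnn : ∀ k ∈ Finset.univ, 0 ≤ (∑ l, D l k * ‖x l‖ ^ 2) - ‖Tmat D x k‖ ^ 2 := by
      intro k _
      have := weighted_sq_le (fun l => D l k) (fun l => (hpos l k).le) (hcol k) x
      simp only [Tmat_apply]; linarith
    exact (Finset.sum_eq_zero_iff_of_nonneg hnn).mp hsum k (Finset.mem_univ k)
  -- hence for each k the variance term vanishes, so x l = Tmat D x k for all l
  have hconst : ∀ k l, x l = Tmat D x k := by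
    intro k l
    have hvar := weighted_var_identity (fun l => D l k) (hcol k) x
    have h0 := hdef k
    have : ∑ j, D j k * ‖x j - ∑ l', D l' k • x l'‖ ^ 2 = 0 := by
      rw [hvar]; simp only [Tmat_apply] at h0; linarith
    have hterm := (Finset.sum_eq_zero_iff_of_nonneg
      (fun j _ => mul_nonneg (hpos j k).le (sq_nonneg _))).mp this l (Finset.mem_univ l)
    have := (mul_eq_zero.mp hterm).resolve_left (ne_of_gt (hpos l k))
    have hnz : ‖x l - ∑ l', D l' k • x l'‖ = 0 := by
      have := sq_eq_zero_iff.mp this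
      exact this
    rw [Tmat_apply]
    exact sub_eq_zero.mp (norm_eq_zero.mp hnz)
  -- x is constant; with sum zero it must vanish
  apply hxne
  have k0 : Fin N := ⟨0, hN⟩
  have hxc : ∀ l, x l = Tmat D x k0 := hconst k0
  have : (N : ℝ) • Tmat D x k0 = ∑ l, x l := by
    rw [Finset.sum_congr rfl fun l _ => hxc l, Finset.sum_const, Finset.card_univ,
      Fintype.card_fin, Nat.cast_smul_eq_nsmul]
  rw [hx0] at this
  have hc0 : Tmat D x k0 = 0 := by
    have hNne : (N:ℝ) ≠ 0 := by positivity
    rwa [smul_eq_zero_iff_right hNne] at this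
  ext l
  rw [hxc l, hc0]; rfl

end tmat

section delta
variable {E : Type*} [NormedAddCommGroup E] [InnerProductSpace ℝ E] [FiniteDimensional ℝ E]
variable {N : ℕ}

lemma Tmat_contraction_delta (hN : 1 ≤ N) (D : Matrix (Fin N) (Fin N) ℝ)
    (hpos : ∀ l k, 0 < D l k) (hrow : ∀ l, ∑ k, D l k = 1) (hcol : ∀ k, ∑ l, D l k = 1) :
    ∃ δ : ℝ, 0 ≤ δ ∧ δ < 1 ∧
      ∀ x : PiLp 2 (fun _ : Fin N => E), (∑ k, x k = 0) → ‖Tmat D x‖ ≤ δ * ‖x‖ := by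
  set X := PiLp 2 (fun _ : Fin N => E)
  let W : Submodule ℝ X :=
    { carrier := {x | ∑ k, x k = 0}
      add_mem' := by
        intro a b ha hb
        simp only [Set.mem_setOf_eq] at *
        have : ∑ k, (a + b) k = ∑ k, a k + ∑ k, b k := by
          rw [← Finset.sum_add_distrib]
          exact Finset.sum_congr rfl fun k _ => rfl
        rw [this, ha, hb, add_zero]
      zero_mem' := by
        simp only [Set.mem_setOf_eq]
        have : ∀ k : Fin N, (0 : X) k = 0 := fun k => rfl
        simp [this]
      smul_mem' := by
        intro c a ha
        simp only [Set.mem_setOf_eq] at *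
        have : ∑ k, (c • a) k = c • ∑ k, a k := by
          rw [Finset.smul_sum]
          exact Finset.sum_congr rfl fun k _ => rfl
        rw [this, ha, smul_zero] }
  have hmemW : ∀ x : X, x ∈ W ↔ ∑ k, x k = 0 := fun x => Iff.rfl
  have hTcont : Continuous (Tmat D : X → X) :=
    (Tmat D (E := E)).continuous_of_finiteDimensional
  have hf : Continuous (fun y : ↥W => ‖Tmat D (y : X)‖) :=
    continuous_norm.comp (hTcont.comp continuous_subtype_val)
  by_cases hsp : (Metric.sphere (0 : ↥W) 1).Nonempty
  · obtain ⟨y0, hy0mem, hmax⟩ :=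
      (isCompact_sphere (0 : ↥W) 1).exists_isMaxOn hsp hf.continuousOn
    have hy0norm : ‖(y0 : X)‖ = 1 := by
      have := mem_sphere_zero_iff_norm.mp hy0mem
      simpa using this
    refine ⟨‖Tmat D (y0 : X)‖, norm_nonneg _, ?_, ?_⟩
    · have hne : (y0 : X) ≠ 0 := by
        intro h; rw [h, norm_zero] at hy0norm; norm_num at hy0norm
      have := Tmat_norm_lt hN D hpos hrow hcol (y0 : X) ((hmemW _).mp y0.2) hne
      rwa [hy0norm] at this
    · intro x hx
      by_cases hx0 : x = 0
      · simp [hx0]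
      · set y : X := ‖x‖⁻¹ • x with hy
        have hynorm : ‖y‖ = 1 := by
          rw [hy, norm_smul, norm_inv, norm_norm, inv_mul_cancel₀ (norm_ne_zero_iff.mpr hx0)]
        have hyW : y ∈ W := W.smul_mem _ hx
        have hsphere : (⟨y, hyW⟩ : ↥W) ∈ Metric.sphere (0 : ↥W) 1 := by
          rw [mem_sphere_zero_iff_norm]
          simpa using hynorm
        have hle := hmax hsphere
        simp only [Set.mem_setOf_eq] at hle
        have hTy : ‖Tmat D y‖ = ‖x‖⁻¹ * ‖Tmat D x‖ := by
          rw [hy, _root_.map_smul, norm_smul, norm_inv, norm_norm]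
        rw [hTy] at hle
        have hxpos : 0 < ‖x‖ := norm_pos_iff.mpr hx0
        calc ‖Tmat D x‖ = ‖x‖ * (‖x‖⁻¹ * ‖Tmat D x‖) := by
              field_simp
          _ ≤ ‖x‖ * ‖Tmat D (y0 : X)‖ := by
              exact mul_le_mul_of_nonneg_left hle hxpos.le
          _ = ‖Tmat D (y0 : X)‖ * ‖x‖ := mul_comm _ _
  · refine ⟨0, le_refl 0, by norm_num, ?_⟩
    intro x hx
    have hx0 : x = 0 := by
      by_contra hne
      apply hsp
      have hyW : (‖x‖⁻¹ • x) ∈ W := W.smul_mem _ hx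
      refine ⟨⟨‖x‖⁻¹ • x, hyW⟩, ?_⟩
      rw [mem_sphere_zero_iff_norm]
      have : ‖(‖x‖⁻¹ • x : X)‖ = 1 := by
        rw [norm_smul, norm_inv, norm_norm, inv_mul_cancel₀ (norm_ne_zero_iff.mpr hne)]
      simpa using this
    simp [hx0]

end delta

lemma seq_tendsto_zero (a s : ℕ → ℝ) (c : ℝ) (hc0 : 0 ≤ c) (hc1 : c < 1)
    (ha : ∀ j, 0 ≤ a j) (hs : ∀ j, 0 ≤ s j) (hrec : ∀ j, a (j + 1) ≤ c * a j + s j)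
    (hs0 : Tendsto s atTop (nhds 0)) : Tendsto a atTop (nhds 0) := by
  rw [Metric.tendsto_atTop]
  intro ε hε
  have hε2 : 0 < (1 - c) * ε / 2 := by
    have : 0 < 1 - c := by linarith
    positivity
  obtain ⟨n₀, hn₀⟩ := (Metric.tendsto_atTop.mp hs0) _ hε2
  have hsb : ∀ j ≥ n₀, s j ≤ (1 - c) * ε / 2 := by
    intro j hj
    have := hn₀ j hj
    rw [Real.dist_eq, sub_zero, abs_of_nonneg (hs j)] at this
    linarith
  have claim : ∀ i, a (n₀ + i) ≤ c ^ i * a n₀ + ε / 2 := by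
    intro i
    induction i with
    | zero => simp; linarith [hε]
    | succ i ih =>
      have h1 := hrec (n₀ + i)
      have h2 := hsb (n₀ + i) (Nat.le_add_right _ _)
      have h3 : a (n₀ + (i + 1)) = a ((n₀ + i) + 1) := by ring_nf
      rw [h3]
      calc a ((n₀ + i) + 1) ≤ c * a (n₀ + i) + s (n₀ + i) := h1
        _ ≤ c * (c ^ i * a n₀ + ε / 2) + (1 - c) * ε / 2 := by
            have := mul_le_mul_of_nonneg_left ih hc0
            linarith
        _ = c ^ (i + 1) * a n₀ + (c * ε / 2 + (1 - c) * ε / 2) := by ring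
        _ = c ^ (i + 1) * a n₀ + ε / 2 := by ring
  have hpow : Tendsto (fun i => c ^ i * a n₀) atTop (nhds 0) := by
    have := tendsto_pow_atTop_nhds_zero_of_lt_one hc0 hc1
    simpa using this.mul_const (a n₀)
  obtain ⟨i₁, hi₁⟩ := (Metric.tendsto_atTop.mp hpow) (ε / 2) (by linarith)
  refine ⟨n₀ + i₁, fun j hj => ?_⟩
  have hj' : a j ≤ c ^ (j - n₀) * a n₀ + ε / 2 := by
    have hje : j = n₀ + (j - n₀) := by omega
    calc a j = a (n₀ + (j - n₀)) := by rw [← hje]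
      _ ≤ c ^ (j - n₀) * a n₀ + ε / 2 := claim _
  have hji : i₁ ≤ j - n₀ := by omega
  have hmono : c ^ (j - n₀) ≤ c ^ i₁ := pow_le_pow_of_le_one hc0 hc1.le hji
  have hci : c ^ i₁ * a n₀ < ε / 2 := by
    have := hi₁ i₁ (le_refl _)
    rw [Real.dist_eq, sub_zero] at this
    calc c ^ i₁ * a n₀ ≤ |c ^ i₁ * a n₀| := le_abs_self _
      _ < ε / 2 := this
  have hca : c ^ (j - n₀) * a n₀ ≤ c ^ i₁ * a n₀ :=
    mul_le_mul_of_nonneg_right hmono (ha n₀)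
  rw [Real.dist_eq, sub_zero, abs_of_nonneg (ha j)]
  linarith

lemma det_tendsto_zero {H : Type*} [NormedAddCommGroup H] [NormedSpace ℝ H]
    (T : H →ₗ[ℝ] H) (Wp : H → Prop) (m : ℕ) (hm : 1 ≤ m) (δ : ℝ)
    (hδ0 : 0 ≤ δ) (hδ1 : δ < 1)
    (hnexp : ∀ x, ‖T x‖ ≤ ‖x‖)
    (hcontr : ∀ x, Wp x → ‖(T ^ m) x‖ ≤ δ * ‖x‖)
    (ψ : ℕ → H) (hψW : ∀ i, Wp (ψ i))
    (ρ : ℕ → ℝ) (hρ0 : ∀ i, 0 ≤ ρ i) (hρ : Tendsto ρ atTop (nhds 0))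
    (hstep : ∀ i, ‖ψ (i + 1) - T (ψ i)‖ ≤ ρ i) :
    Tendsto (fun i => ‖ψ i‖) atTop (nhds 0) := by
  have hpow_apply : ∀ (j : ℕ) (x : H), (T ^ (j + 1)) x = T ((T ^ j) x) := by
    intro j x
    rw [pow_succ']; rfl
  have hnexp_pow : ∀ (j : ℕ) (x : H), ‖(T ^ j) x‖ ≤ ‖x‖ := by
    intro j
    induction j with
    | zero => intro x; simp
    | succ j ih =>
      intro x
      rw [hpow_apply]
      exact le_trans (hnexp _) (ih x)
  have claim1 : ∀ i j, ‖ψ (i + j) - (T ^ j) (ψ i)‖ ≤ ∑ t ∈ Finset.range j, ρ (i + t) := by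
    intro i j
    induction j with
    | zero => simp
    | succ j ih =>
      have hsplit : ψ (i + (j + 1)) - (T ^ (j + 1)) (ψ i)
          = (ψ ((i + j) + 1) - T (ψ (i + j))) + T (ψ (i + j) - (T ^ j) (ψ i)) := by
        rw [hpow_apply, map_sub]
        have : i + (j + 1) = (i + j) + 1 := by ring
        rw [this]
        abel
      rw [hsplit, Finset.sum_range_succ]
      calc ‖(ψ ((i + j) + 1) - T (ψ (i + j))) + T (ψ (i + j) - (T ^ j) (ψ i))‖
          ≤ ‖ψ ((i + j) + 1) - T (ψ (i + j))‖ + ‖T (ψ (i + j) - (T ^ j) (ψ i))‖ :=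
            norm_add_le _ _
        _ ≤ ρ (i + j) + ‖ψ (i + j) - (T ^ j) (ψ i)‖ :=
            add_le_add (hstep _) (hnexp _)
        _ ≤ ρ (i + j) + ∑ t ∈ Finset.range j, ρ (i + t) := by linarith
        _ = ∑ t ∈ Finset.range j, ρ (i + t) + ρ (i + j) := by ring
  set s : ℕ → ℝ := fun j => ∑ t ∈ Finset.range m, ρ (j * m + t) with hs_def
  have hs0 : ∀ j, 0 ≤ s j := fun j => Finset.sum_nonneg fun t _ => hρ0 _
  have hstend : Tendsto s atTop (nhds 0) := by
    rw [hs_def]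
    have : (0:ℝ) = ∑ t ∈ Finset.range m, (0:ℝ) := by simp
    rw [this]
    apply tendsto_finset_sum
    intro t _
    apply hρ.comp
    apply tendsto_atTop_mono (fun j => ?_) tendsto_id
    calc (j : ℕ) = j * 1 := (mul_one j).symm
      _ ≤ j * m := Nat.mul_le_mul_left j hm
      _ ≤ j * m + t := Nat.le_add_right _ _
  set a : ℕ → ℝ := fun j => ‖ψ (j * m)‖ with ha_def
  have harec : ∀ j, a (j + 1) ≤ δ * a j + s j := by
    intro j
    have h1 : (j + 1) * m = j * m + m := by ring
    have h2 := claim1 (j * m) m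
    have h3 := hcontr (ψ (j * m)) (hψW _)
    calc a (j + 1) = ‖ψ (j * m + m)‖ := by rw [ha_def]; simp only [h1]
      _ ≤ ‖(T ^ m) (ψ (j * m))‖ + ‖ψ (j * m + m) - (T ^ m) (ψ (j * m))‖ := by
          have := norm_add_le ((T ^ m) (ψ (j * m))) (ψ (j * m + m) - (T ^ m) (ψ (j * m)))
          simpa using this
      _ ≤ δ * a j + s j := add_le_add h3 h2
  have hatend : Tendsto a atTop (nhds 0) :=
    seq_tendsto_zero a s δ hδ0 hδ1 (fun j => norm_nonneg _) hs0 harec hstend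
  -- bound ‖ψ i‖ by a (i / m) + s (i / m)
  have hbound : ∀ i, ‖ψ i‖ ≤ a (i / m) + s (i / m) := by
    intro i
    have hmpos : 0 < m := hm
    have hdm : i = (i / m) * m + i % m := by
      rw [mul_comm]; exact (Nat.div_add_mod i m).symm
    have h2 := claim1 ((i / m) * m) (i % m)
    have h3 : ‖ψ ((i / m) * m + i % m)‖
        ≤ ‖ψ ((i / m) * m)‖ + ∑ t ∈ Finset.range (i % m), ρ ((i / m) * m + t) := by
      calc ‖ψ ((i / m) * m + i % m)‖
          ≤ ‖(T ^ (i % m)) (ψ ((i / m) * m))‖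
            + ‖ψ ((i / m) * m + i % m) - (T ^ (i % m)) (ψ ((i / m) * m))‖ := by
            have := norm_add_le ((T ^ (i % m)) (ψ ((i / m) * m)))
              (ψ ((i / m) * m + i % m) - (T ^ (i % m)) (ψ ((i / m) * m)))
            simpa using this
        _ ≤ ‖ψ ((i / m) * m)‖ + ∑ t ∈ Finset.range (i % m), ρ ((i / m) * m + t) :=
            add_le_add (hnexp_pow _ _) h2
    have h4 : ∑ t ∈ Finset.range (i % m), ρ ((i / m) * m + t) ≤ s (i / m) := by
      apply Finset.sum_le_sum_of_subset_of_nonneg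
      · exact Finset.range_subset_range.mpr (Nat.mod_lt i hmpos).le
      · intro t _ _; exact hρ0 _
    calc ‖ψ i‖ = ‖ψ ((i / m) * m + i % m)‖ := by rw [← hdm]
      _ ≤ ‖ψ ((i / m) * m)‖ + ∑ t ∈ Finset.range (i % m), ρ ((i / m) * m + t) := h3
      _ ≤ a (i / m) + s (i / m) := add_le_add (le_refl _) h4
  have hdivtend : Tendsto (fun i : ℕ => i / m) atTop atTop := by
    apply tendsto_atTop_atTop.mpr
    intro b
    refine ⟨b * m, fun i hi => ?_⟩
    exact (Nat.le_div_iff_mul_le hm).mpr hi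
  have hgoal : Tendsto (fun i => a (i / m) + s (i / m)) atTop (nhds 0) := by
    have h1 := hatend.comp hdivtend
    have h2 := hstend.comp hdivtend
    have := h1.add h2
    simpa using this
  exact squeeze_zero (fun i => norm_nonneg _) hbound hgoal

lemma noise_alpha_tendsto
    {Ω : Type*} {mΩ : MeasurableSpace Ω} (ℙ : Measure Ω) [IsProbabilityMeasure ℙ]
    (ℱ : Filtration ℕ mΩ) {M : ℕ}
    (φ F : ℕ → Ω → EuclideanSpace ℝ (Fin M))
    (hφmeas : ∀ i, StronglyMeasurable[ℱ i] (φ i))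
    (hFmeas : ∀ i, StronglyMeasurable[ℱ (i + 1)] (F (i + 1)))
    (hFsq : ∀ i, MemLp (F (i + 1)) 2 ℙ)
    (α : ℕ → ℝ) (hαnn : ∀ i, 0 ≤ α (i + 1)) (hαsq : Summable fun i => (α i) ^ 2)
    (L₂ : ℝ) (hL₂ : 0 ≤ L₂)
    (hFcond : ∀ i, ∀ᵐ ω ∂ℙ,
      (ℙ[fun ω' => ‖F (i + 1) ω'‖ ^ 2|ℱ i]) ω ≤ L₂ * (1 + ‖φ i ω‖ ^ 2))
    (hbdd : ∀ᵐ ω ∂ℙ, ∃ B : ℝ, ∀ i, ‖φ i ω‖ ≤ B) :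
    ∀ᵐ ω ∂ℙ, Tendsto (fun i => α (i + 1) * ‖F (i + 1) ω‖) atTop (nhds 0) := by
  -- the truncation sets
  set Bset : ℕ → ℕ → Set Ω := fun R i => {ω | ‖φ i ω‖ ≤ (R : ℝ)} with hBset
  have hBmeasF : ∀ R i, MeasurableSet[ℱ i] (Bset R i) := by
    intro R i
    exact (hφmeas i).norm.measurable measurableSet_Iic
  have hBmeas : ∀ R i, MeasurableSet (Bset R i) := fun R i => ℱ.le i _ (hBmeasF R i)
  -- integrability of ‖F‖²
  have hFint : ∀ i, Integrable (fun ω => ‖F (i + 1) ω‖ ^ 2) ℙ := by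
    intro i
    have := (hFsq i).integrable_norm_rpow two_ne_zero ENNReal.ofNat_ne_top
    refine this.congr (Filter.Eventually.of_forall fun ω => ?_)
    norm_num [Real.rpow_natCast]
  have hFnn : ∀ i, (0:Ω → ℝ) ≤ᵐ[ℙ] fun ω => ‖F (i + 1) ω‖ ^ 2 :=
    fun i => Filter.Eventually.of_forall fun ω => sq_nonneg _
  -- integral bound on truncated squares
  have hIbound : ∀ R i,
      ∫ ω, (Bset R i).indicator (fun ω' => ‖F (i + 1) ω'‖ ^ 2) ω ∂ℙ
        ≤ L₂ * (1 + (R : ℝ) ^ 2) := by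
    intro R i
    have hint : Integrable ((Bset R i).indicator fun ω' => ‖F (i + 1) ω'‖ ^ 2) ℙ :=
      (hFint i).indicator (hBmeas R i)
    rw [← integral_condExp (ℱ.le i)]
    have hci := condExp_indicator (m := ℱ i) (μ := ℙ) (hFint i) (hBmeasF R i)
    have hcnn := condExp_nonneg (m := ℱ i) (μ := ℙ) (hFnn i)
    have hcond := hFcond i
    have hintc : Integrable (ℙ[(Bset R i).indicator fun ω' => ‖F (i + 1) ω'‖ ^ 2|ℱ i]) ℙ :=
      integrable_condExp
    have hptwise : ∀ᵐ ω ∂ℙ,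
        (ℙ[(Bset R i).indicator fun ω' => ‖F (i + 1) ω'‖ ^ 2|ℱ i]) ω
          ≤ L₂ * (1 + (R : ℝ) ^ 2) := by
      filter_upwards [hci, hcnn, hcond] with ω hciω hcnnω hcondω
      rw [hciω]
      by_cases hω : ω ∈ Bset R i
      · rw [Set.indicator_of_mem hω]
        have hφR : ‖φ i ω‖ ≤ (R : ℝ) := hω
        have : ‖φ i ω‖ ^ 2 ≤ (R : ℝ) ^ 2 := by
          apply pow_le_pow_left₀ (norm_nonneg _) hφR
        calc (ℙ[fun ω' => ‖F (i + 1) ω'‖ ^ 2|ℱ i]) ω ≤ L₂ * (1 + ‖φ i ω‖ ^ 2) := hcondω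
          _ ≤ L₂ * (1 + (R : ℝ) ^ 2) := by nlinarith
      · rw [Set.indicator_of_notMem hω]
        positivity
    calc ∫ ω, (ℙ[(Bset R i).indicator fun ω' => ‖F (i + 1) ω'‖ ^ 2|ℱ i]) ω ∂ℙ
        ≤ ∫ _ω, L₂ * (1 + (R : ℝ) ^ 2) ∂ℙ := integral_mono_ae hintc (integrable_const _) hptwise
      _ = L₂ * (1 + (R : ℝ) ^ 2) := by simp
  -- a.e. finiteness of the truncated weighted series, for each R
  have hkey : ∀ R : ℕ, ∀ᵐ ω ∂ℙ,
      (∑' i, ENNReal.ofReal ((α (i+1))^2 *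
        (Bset R i).indicator (fun ω' => ‖F (i + 1) ω'‖ ^ 2) ω)) < ⊤ := by
    intro R
    set x : ℕ → Ω → ℝ := fun i ω =>
      (α (i+1))^2 * (Bset R i).indicator (fun ω' => ‖F (i + 1) ω'‖ ^ 2) ω with hx
    have hxmeas : ∀ i, Measurable (x i) := by
      intro i
      apply Measurable.const_mul
      exact Measurable.indicator
        ((((hFmeas i).mono (ℱ.le (i+1))).norm.measurable).pow_const 2) (hBmeas R i)
    have hxnn : ∀ i ω, 0 ≤ x i ω := by
      intro i ω
      apply mul_nonneg (sq_nonneg _)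
      exact Set.indicator_nonneg (fun ω' _ => sq_nonneg _) ω
    have hxint : ∀ i, Integrable (x i) ℙ :=
      fun i => ((hFint i).indicator (hBmeas R i)).const_mul _
    have hxI : ∀ i, ∫ ω, x i ω ∂ℙ ≤ (α (i+1))^2 * (L₂ * (1 + (R : ℝ) ^ 2)) := by
      intro i
      rw [hx]
      simp only
      rw [integral_const_mul]
      exact mul_le_mul_of_nonneg_left (hIbound R i) (sq_nonneg _)
    have hlin : ∫⁻ ω, (∑' i, ENNReal.ofReal (x i ω)) ∂ℙ ≠ ⊤ := by
      rw [lintegral_tsum (fun i => ((hxmeas i).ennreal_ofReal).aemeasurable)]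
      have hterm : ∀ i, ∫⁻ ω, ENNReal.ofReal (x i ω) ∂ℙ
          ≤ ENNReal.ofReal ((α (i+1))^2 * (L₂ * (1 + (R : ℝ) ^ 2))) := by
        intro i
        rw [← ofReal_integral_eq_lintegral_ofReal (hxint i)
          (Filter.Eventually.of_forall fun ω => hxnn i ω)]
        exact ENNReal.ofReal_le_ofReal (hxI i)
      have hsummable : Summable (fun i => (α (i+1))^2 * (L₂ * (1 + (R : ℝ) ^ 2))) :=
        ((summable_nat_add_iff 1).mpr hαsq).mul_right _
      have hsum : (∑' i, ENNReal.ofReal ((α (i+1))^2 * (L₂ * (1 + (R : ℝ) ^ 2)))) ≠ ⊤ := by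
        rw [← ENNReal.ofReal_tsum_of_nonneg
          (fun i => mul_nonneg (sq_nonneg _) (by positivity)) hsummable]
        exact ENNReal.ofReal_ne_top
      exact ne_top_of_le_ne_top hsum (ENNReal.tsum_le_tsum hterm)
    exact ae_lt_top (Measurable.ennreal_tsum fun i => (hxmeas i).ennreal_ofReal) hlin
  -- combine over R and with boundedness
  have hallR := ae_all_iff.mpr hkey
  filter_upwards [hallR, hbdd] with ω hωR hωB
  obtain ⟨B, hB⟩ := hωB
  set R : ℕ := ⌈B⌉₊ with hR
  have hmem : ∀ i, ω ∈ Bset R i := by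
    intro i
    show ‖φ i ω‖ ≤ (R : ℝ)
    exact le_trans (hB i) (Nat.le_ceil B)
  have hfin := hωR R
  have hind : ∀ i, (Bset R i).indicator (fun ω' => ‖F (i + 1) ω'‖ ^ 2) ω
      = ‖F (i + 1) ω‖ ^ 2 := fun i => Set.indicator_of_mem (hmem i) _
  have hfin' : (∑' i, ENNReal.ofReal ((α (i+1))^2 * ‖F (i + 1) ω‖ ^ 2)) ≠ ⊤ := by
    have heq : (∑' i, ENNReal.ofReal ((α (i+1))^2 * ‖F (i + 1) ω‖ ^ 2))
        = ∑' i, ENNReal.ofReal ((α (i+1))^2 *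
            (Bset R i).indicator (fun ω' => ‖F (i + 1) ω'‖ ^ 2) ω) :=
      tsum_congr fun i => by rw [hind i]
    rw [heq]
    exact hfin.ne
  have htend0 := ENNReal.tendsto_atTop_zero_of_tsum_ne_top hfin'
  have htendR : Tendsto (fun i => (α (i+1))^2 * ‖F (i + 1) ω‖ ^ 2) atTop (nhds 0) := by
    have hcont := (ENNReal.tendsto_toReal (ENNReal.zero_ne_top)).comp htend0
    simp only [ENNReal.toReal_zero] at hcont
    refine Tendsto.congr (fun i => ?_) hcont
    simp only [Function.comp_apply]
    exact ENNReal.toReal_ofReal (mul_nonneg (sq_nonneg _) (sq_nonneg _))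
  have := (Real.continuous_sqrt.tendsto 0).comp htendR
  rw [Real.sqrt_zero] at this
  refine Tendsto.congr (fun i => ?_) this
  simp only [Function.comp_apply]
  rw [← mul_pow, Real.sqrt_sq (mul_nonneg (hαnn i) (norm_nonneg _))]

/-- **Theorem 2, asymptotic agreement.** Under the network connectivity
assumptions, Lipschitz gradients, square-summable step sizes, conditionally square-integrable
noise, and almost surely bounded iterates, every agent's parameter vector in the diffusion
adaptation–combination recursion converges almost surely to the network average. -/
theorem diffusion_asymptotic_agreement
    (N M : ℕ) (hN : 1 ≤ N) (hM : 1 ≤ M)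
    (C : Matrix (Fin N) (Fin N) ℝ)
    (hCnn : ∀ l k, 0 ≤ C l k)
    (hCrow : ∀ l, ∑ k, C l k = 1)
    (hCcol : ∀ k, ∑ l, C l k = 1)
    (hCtr : 0 < C.trace)
    (hCirr : ∀ k l, ∃ m, 1 ≤ m ∧ 0 < (C ^ m) k l)
    {Ω : Type*} {mΩ : MeasurableSpace Ω} (ℙ : Measure Ω) [IsProbabilityMeasure ℙ]
    (ℱ : Filtration ℕ mΩ)
    (φ : Fin N → ℕ → Ω → EuclideanSpace ℝ (Fin M))
    (hφmeas : ∀ k i, StronglyMeasurable[ℱ i] (φ k i))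
    (F : Fin N → ℕ → Ω → EuclideanSpace ℝ (Fin M))
    (hFmeas : ∀ k i, StronglyMeasurable[ℱ (i + 1)] (F k (i + 1)))
    (hFsq : ∀ k i, MemLp (F k (i + 1)) 2 ℙ)
    (g : Fin N → ℕ → EuclideanSpace ℝ (Fin M) → EuclideanSpace ℝ (Fin M))
    (L₁ : ℝ) (hgLip : ∀ k i x y, ‖g k i x - g k i y‖ ≤ L₁ * ‖x - y‖)
    (hg0 : ∃ B : ℝ, ∀ k i, ‖g k i 0‖ ≤ B)
    (α : ℕ → ℝ) (hαpos : ∀ i, 1 ≤ i → 0 < α i)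
    (hαdiv : Tendsto (fun n => ∑ i ∈ Finset.range n, α i) atTop atTop)
    (hαsq : Summable fun i => (α i) ^ 2)
    (hrec : ∀ k i ω, φ k (i + 1) ω =
      ∑ l, C l k • (φ l i ω - α (i + 1) • (g l i (φ l i ω) + F l (i + 1) ω)))
    (L₂ : ℝ)
    (hFcond : ∀ k i, ∀ᵐ ω ∂ℙ,
      (ℙ[fun ω' => ‖F k (i + 1) ω'‖ ^ 2|ℱ i]) ω ≤ L₂ * (1 + ‖φ k i ω‖ ^ 2))
    (hbdd : ∀ k, ∀ᵐ ω ∂ℙ, ∃ B : ℝ, ∀ i, ‖φ k i ω‖ ≤ B) :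
    ∀ k, ∀ᵐ ω ∂ℙ,
      Tendsto (fun i => φ k i ω - (N : ℝ)⁻¹ • ∑ l, φ l i ω) atTop (nhds 0) := by
  classical
  obtain ⟨Bg, hBg⟩ := hg0
  have hBg0 : 0 ≤ Bg := le_trans (norm_nonneg _) (hBg ⟨0, hN⟩ 0)
  -- primitivity and the contraction constant
  obtain ⟨m, hm1, hmpos⟩ := primitive_of_irreducible C hN hCnn hCtr hCirr
  have hmrow := pow_row_sum C hCrow m
  have hmcol := pow_col_sum C hCcol m
  obtain ⟨δ, hδ0, hδ1, hδ⟩ :=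
    Tmat_contraction_delta (E := EuclideanSpace ℝ (Fin M)) hN (C ^ m) (fun l k => hmpos l k) hmrow hmcol
  set X := PiLp 2 (fun _ : Fin N => EuclideanSpace ℝ (Fin M))
  set T : X →ₗ[ℝ] X := Tmat C with hT
  have hnexp : ∀ x : X, ‖T x‖ ≤ ‖x‖ := fun x => Tmat_norm_le C hCnn hCrow hCcol x
  have hcontr : ∀ x : X, (∑ k, x k = 0) → ‖(T ^ m) x‖ ≤ δ * ‖x‖ := by
    intro x hx
    rw [hT, Tmat_pow]
    exact hδ x hx
  -- α (i+1) tends to zero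
  have hαnn : ∀ i, 0 ≤ α (i + 1) := fun i => (hαpos (i + 1) (by omega)).le
  have hαtend : Tendsto (fun i => α (i + 1)) atTop (nhds 0) := by
    have h2 := hαsq.tendsto_atTop_zero
    have h3 : Tendsto (fun i => (α (i + 1)) ^ 2) atTop (nhds 0) :=
      h2.comp (tendsto_add_atTop_nat 1)
    have h4 := (Real.continuous_sqrt.tendsto 0).comp h3
    rw [Real.sqrt_zero] at h4
    refine Tendsto.congr (fun i => ?_) h4
    simp only [Function.comp_apply]
    rw [Real.sqrt_sq (hαnn i)]
  -- noise terms tend to zero a.s.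
  set L₂' := max L₂ 0 with hL₂'
  have hFcond' : ∀ k i, ∀ᵐ ω ∂ℙ,
      (ℙ[fun ω' => ‖F k (i + 1) ω'‖ ^ 2|ℱ i]) ω ≤ L₂' * (1 + ‖φ k i ω‖ ^ 2) := by
    intro k i
    filter_upwards [hFcond k i] with ω hω
    calc (ℙ[fun ω' => ‖F k (i + 1) ω'‖ ^ 2|ℱ i]) ω ≤ L₂ * (1 + ‖φ k i ω‖ ^ 2) := hω
      _ ≤ L₂' * (1 + ‖φ k i ω‖ ^ 2) :=
        mul_le_mul_of_nonneg_right (le_max_left _ _) (by positivity)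
  have hnoise : ∀ᵐ ω ∂ℙ, ∀ k,
      Tendsto (fun i => α (i + 1) * ‖F k (i + 1) ω‖) atTop (nhds 0) := by
    rw [ae_all_iff]
    intro k
    exact noise_alpha_tendsto ℙ ℱ (φ k) (F k) (hφmeas k) (hFmeas k) (hFsq k) α hαnn hαsq
      L₂' (le_max_right _ _) (hFcond' k) (hbdd k)
  have hbdd' : ∀ᵐ ω ∂ℙ, ∀ k, ∃ B : ℝ, ∀ i, ‖φ k i ω‖ ≤ B := ae_all_iff.mpr hbdd
  intro k
  filter_upwards [hnoise, hbdd'] with ω hFω hBω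
  -- uniform bound on all trajectories
  choose Bb hBb using hBω
  set BB : ℝ := ∑ l, |Bb l| with hBB
  have hBB0 : 0 ≤ BB := Finset.sum_nonneg fun l _ => abs_nonneg _
  have hφbd : ∀ l i, ‖φ l i ω‖ ≤ BB := by
    intro l i
    calc ‖φ l i ω‖ ≤ Bb l := hBb l i
      _ ≤ |Bb l| := le_abs_self _
      _ ≤ BB := Finset.single_le_sum (fun l' _ => abs_nonneg (Bb l')) (Finset.mem_univ l)
  -- the disagreement vector
  set ψ : ℕ → X := fun i => WithLp.toLp 2 (fun k' => φ k' i ω - (N : ℝ)⁻¹ • ∑ l, φ l i ω) with hψ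
  have hψW : ∀ i, ∑ k', ψ i k' = 0 := by
    intro i
    have : ∑ k', ψ i k' = (∑ k', φ k' i ω) - ∑ k' : Fin N, (N : ℝ)⁻¹ • ∑ l, φ l i ω := by
      rw [← Finset.sum_sub_distrib]
    rw [this, Finset.sum_const, Finset.card_univ, Fintype.card_fin,
      ← Nat.cast_smul_eq_nsmul ℝ, smul_smul]
    have hNne : (N : ℝ) ≠ 0 := by positivity
    rw [mul_inv_cancel₀ hNne, one_smul, sub_self]
  -- the drift+noise term
  set u : ℕ → Fin N → EuclideanSpace ℝ (Fin M) := fun i l => g l i (φ l i ω) + F l (i + 1) ω with hu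
  have hswap : ∀ x : Fin N → EuclideanSpace ℝ (Fin M), ∑ k', ∑ l, C l k' • x l = ∑ l, x l := by
    intro x
    rw [Finset.sum_comm]
    calc ∑ l, ∑ k', C l k' • x l = ∑ l, (∑ k', C l k') • x l := by
          exact Finset.sum_congr rfl fun l _ => (Finset.sum_smul).symm
      _ = ∑ l, x l := by
          exact Finset.sum_congr rfl fun l _ => by rw [hCrow l, one_smul]
  have hφ1 : ∀ k' i, φ k' (i + 1) ω
      = (∑ l, C l k' • φ l i ω) - α (i + 1) • ∑ l, C l k' • u i l := by
    intro k' i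
    rw [hrec k' i ω]
    calc ∑ l, C l k' • (φ l i ω - α (i + 1) • (g l i (φ l i ω) + F l (i + 1) ω))
        = ∑ l, (C l k' • φ l i ω - α (i + 1) • (C l k' • u i l)) := by
          refine Finset.sum_congr rfl fun l _ => ?_
          rw [smul_sub, smul_comm (C l k') (α (i + 1))]
      _ = (∑ l, C l k' • φ l i ω) - α (i + 1) • ∑ l, C l k' • u i l := by
          rw [Finset.sum_sub_distrib, Finset.smul_sum]
  have hS : ∀ i, (∑ l, φ l (i + 1) ω) = (∑ l, φ l i ω) - α (i + 1) • ∑ l, u i l := by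
    intro i
    calc ∑ k', φ k' (i + 1) ω
        = ∑ k', ((∑ l, C l k' • φ l i ω) - α (i + 1) • ∑ l, C l k' • u i l) :=
          Finset.sum_congr rfl fun k' _ => hφ1 k' i
      _ = (∑ k', ∑ l, C l k' • φ l i ω) - α (i + 1) • ∑ k', ∑ l, C l k' • u i l := by
          rw [Finset.sum_sub_distrib, Finset.smul_sum]
      _ = (∑ l, φ l i ω) - α (i + 1) • ∑ l, u i l := by
          rw [hswap (fun l => φ l i ω), hswap (u i)]
  have hTψ : ∀ i k', T (ψ i) k'
      = (∑ l, C l k' • φ l i ω) - (N : ℝ)⁻¹ • ∑ l, φ l i ω := by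
    intro i k'
    rw [hT, Tmat_apply]
    calc ∑ l, C l k' • ψ i l
        = ∑ l, (C l k' • φ l i ω - C l k' • ((N : ℝ)⁻¹ • ∑ l', φ l' i ω)) := by
          exact Finset.sum_congr rfl fun l _ => smul_sub _ _ _
      _ = (∑ l, C l k' • φ l i ω) - (∑ l, C l k') • ((N : ℝ)⁻¹ • ∑ l', φ l' i ω) := by
          rw [Finset.sum_sub_distrib, Finset.sum_smul]
      _ = (∑ l, C l k' • φ l i ω) - (N : ℝ)⁻¹ • ∑ l', φ l' i ω := by
          rw [hCcol k', one_smul]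
  have hcomp : ∀ i k', ψ (i + 1) k' - T (ψ i) k'
      = α (i + 1) • ((N : ℝ)⁻¹ • ∑ l, u i l - ∑ l, C l k' • u i l) := by
    intro i k'
    have h1 : ψ (i + 1) k' = ((∑ l, C l k' • φ l i ω) - α (i + 1) • ∑ l, C l k' • u i l)
        - (N : ℝ)⁻¹ • ((∑ l, φ l i ω) - α (i + 1) • ∑ l, u i l) := by
      show φ k' (i + 1) ω - (N : ℝ)⁻¹ • ∑ l, φ l (i + 1) ω = _
      rw [hφ1 k' i, hS i]
    rw [h1, hTψ i k']
    module
  -- norm bound on each entry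
  set K : ℝ := Bg + |L₁| * BB with hK
  have hK0 : 0 ≤ K := by positivity
  have hub : ∀ i l, ‖u i l‖ ≤ K + ‖F l (i + 1) ω‖ := by
    intro i l
    have hg1 : ‖g l i (φ l i ω)‖ ≤ Bg + L₁ * ‖φ l i ω‖ := by
      have h1 := hgLip l i (φ l i ω) 0
      rw [sub_zero] at h1
      have h2 := norm_sub_norm_le (g l i (φ l i ω)) (g l i 0)
      have h3 := hBg l i
      linarith
    have hg2 : ‖g l i (φ l i ω)‖ ≤ K := by
      have h4 : L₁ * ‖φ l i ω‖ ≤ |L₁| * BB := by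
        calc L₁ * ‖φ l i ω‖ ≤ |L₁| * ‖φ l i ω‖ :=
              mul_le_mul_of_nonneg_right (le_abs_self _) (norm_nonneg _)
          _ ≤ |L₁| * BB := mul_le_mul_of_nonneg_left (hφbd l i) (abs_nonneg _)
      rw [hK]; linarith
    calc ‖u i l‖ ≤ ‖g l i (φ l i ω)‖ + ‖F l (i + 1) ω‖ := norm_add_le _ _
      _ ≤ K + ‖F l (i + 1) ω‖ := by linarith
  set w : ℕ → ℝ := fun i => ∑ l, (K + ‖F l (i + 1) ω‖) with hw
  have hw0 : ∀ i, 0 ≤ w i := fun i => Finset.sum_nonneg fun l _ => by positivity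
  have husum : ∀ i, ∑ l, ‖u i l‖ ≤ w i := fun i => Finset.sum_le_sum fun l _ => hub i l
  have hentry : ∀ i k', ‖ψ (i + 1) k' - T (ψ i) k'‖ ≤ 2 * α (i + 1) * w i := by
    intro i k'
    rw [hcomp i k']
    rw [norm_smul, Real.norm_eq_abs, abs_of_nonneg (hαnn i)]
    have hA : ‖(N : ℝ)⁻¹ • ∑ l, u i l‖ ≤ w i := by
      rw [norm_smul, Real.norm_eq_abs]
      have hNi : |(N : ℝ)⁻¹| ≤ 1 := by
        rw [abs_of_nonneg (by positivity)]
        apply inv_le_one_of_one_le₀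
        exact_mod_cast hN
      calc |(N : ℝ)⁻¹| * ‖∑ l, u i l‖ ≤ 1 * ‖∑ l, u i l‖ :=
            mul_le_mul_of_nonneg_right hNi (norm_nonneg _)
        _ = ‖∑ l, u i l‖ := one_mul _
        _ ≤ ∑ l, ‖u i l‖ := norm_sum_le _ _
        _ ≤ w i := husum i
    have hB : ‖∑ l, C l k' • u i l‖ ≤ w i := by
      calc ‖∑ l, C l k' • u i l‖ ≤ ∑ l, ‖C l k' • u i l‖ := norm_sum_le _ _
        _ ≤ ∑ l, ‖u i l‖ := by
            refine Finset.sum_le_sum fun l _ => ?_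
            rw [norm_smul, Real.norm_eq_abs, abs_of_nonneg (hCnn l k')]
            have hCle : C l k' ≤ 1 := by
              have := Finset.single_le_sum (f := fun l' => C l' k')
                (fun l' _ => hCnn l' k') (Finset.mem_univ l)
              rw [hCcol k'] at this
              exact this
            calc C l k' * ‖u i l‖ ≤ 1 * ‖u i l‖ :=
                  mul_le_mul_of_nonneg_right hCle (norm_nonneg _)
              _ = ‖u i l‖ := one_mul _
        _ ≤ w i := husum i
    calc α (i + 1) * ‖(N : ℝ)⁻¹ • ∑ l, u i l - ∑ l, C l k' • u i l‖
        ≤ α (i + 1) * (‖(N : ℝ)⁻¹ • ∑ l, u i l‖ + ‖∑ l, C l k' • u i l‖) :=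
          mul_le_mul_of_nonneg_left (norm_sub_le _ _) (hαnn i)
      _ ≤ α (i + 1) * (w i + w i) :=
          mul_le_mul_of_nonneg_left (add_le_add hA hB) (hαnn i)
      _ = 2 * α (i + 1) * w i := by ring
  set ρ : ℕ → ℝ := fun i => Real.sqrt N * (2 * α (i + 1) * w i) with hρ
  have hρ0 : ∀ i, 0 ≤ ρ i := by
    intro i
    have := hαnn i
    have := hw0 i
    positivity
  have hstep : ∀ i, ‖ψ (i + 1) - T (ψ i)‖ ≤ ρ i := by
    intro i
    have hri : 0 ≤ 2 * α (i + 1) * w i := by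
      have := hαnn i; have := hw0 i; positivity
    have hsq : ‖ψ (i + 1) - T (ψ i)‖ ^ 2 ≤ (N : ℝ) * (2 * α (i + 1) * w i) ^ 2 := by
      rw [PiLp.norm_sq_eq_of_L2]
      calc ∑ k', ‖(ψ (i + 1) - T (ψ i)) k'‖ ^ 2
          ≤ ∑ _k' : Fin N, (2 * α (i + 1) * w i) ^ 2 := by
            refine Finset.sum_le_sum fun k' _ => ?_
            have h1 : (ψ (i + 1) - T (ψ i)) k' = ψ (i + 1) k' - T (ψ i) k' := rfl
            rw [h1]
            exact pow_le_pow_left₀ (norm_nonneg _) (hentry i k') 2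
        _ = (N : ℝ) * (2 * α (i + 1) * w i) ^ 2 := by
            rw [Finset.sum_const, Finset.card_univ, Fintype.card_fin, nsmul_eq_mul]
    have h2 : ‖ψ (i + 1) - T (ψ i)‖ ≤ Real.sqrt ((N : ℝ) * (2 * α (i + 1) * w i) ^ 2) := by
      calc ‖ψ (i + 1) - T (ψ i)‖ = Real.sqrt (‖ψ (i + 1) - T (ψ i)‖ ^ 2) :=
            (Real.sqrt_sq (norm_nonneg _)).symm
        _ ≤ Real.sqrt ((N : ℝ) * (2 * α (i + 1) * w i) ^ 2) := Real.sqrt_le_sqrt hsq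
    rw [Real.sqrt_mul (by positivity), Real.sqrt_sq hri] at h2
    exact h2
  have hρtend : Tendsto ρ atTop (nhds 0) := by
    have hterm : Tendsto (fun i => α (i + 1) * (N : ℝ) * K
        + ∑ l, α (i + 1) * ‖F l (i + 1) ω‖) atTop (nhds 0) := by
      have h1 : Tendsto (fun i => α (i + 1) * (N : ℝ) * K) atTop (nhds 0) := by
        have := (hαtend.mul_const ((N : ℝ))).mul_const K
        simpa using this
      have h2 : Tendsto (fun i => ∑ l, α (i + 1) * ‖F l (i + 1) ω‖) atTop (nhds 0) := by
        have : (0:ℝ) = ∑ _l : Fin N, (0:ℝ) := by simp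
        rw [this]
        exact tendsto_finset_sum _ fun l _ => hFω l
      have := h1.add h2
      simpa using this
    have := hterm.const_mul (Real.sqrt N * 2)
    rw [mul_zero] at this
    refine Tendsto.congr (fun i => ?_) this
    have hws : w i = (N : ℝ) * K + ∑ l, ‖F l (i + 1) ω‖ := by
      simp only [hw]
      rw [Finset.sum_add_distrib, Finset.sum_const, Finset.card_univ,
        Fintype.card_fin, nsmul_eq_mul]
    have hms : ∑ l, α (i + 1) * ‖F l (i + 1) ω‖ = α (i + 1) * ∑ l, ‖F l (i + 1) ω‖ :=
      (Finset.mul_sum _ _ _).symm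
    simp only [hρ]
    rw [hms, hws]
    ring
  -- apply the deterministic convergence lemma
  have htend : Tendsto (fun i => ‖ψ i‖) atTop (nhds 0) := by
    refine det_tendsto_zero T (fun x => ∑ k', x k' = 0) m hm1 δ hδ0 hδ1 hnexp hcontr
      ψ hψW ρ hρ0 hρtend ?_
    intro i
    exact hstep i
  -- conclude for the fixed agent k
  have hcompbd : ∀ i, ‖ψ i k‖ ≤ ‖ψ i‖ := by
    intro i
    refine le_of_sq_le_sq' (norm_nonneg _) ?_ (norm_nonneg _)
    have houter := PiLp.norm_sq_eq_of_L2 (fun _ : Fin N => EuclideanSpace ℝ (Fin M)) (ψ i)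
    rw [houter]
    exact Finset.single_le_sum (f := fun k' => ‖ψ i k'‖ ^ 2)
      (fun k' _ => sq_nonneg _) (Finset.mem_univ k)
  rw [tendsto_zero_iff_norm_tendsto_zero]
  exact squeeze_zero (fun i => norm_nonneg _) hcompbd htend
end

section
/- Let C be an N×N real doubly stochastic primitive matrix (N ≥ 1) and let J denote the N×N all-ones matrix. Then every eigenvalue λ ∈ ℂ of the matrix C − (1/N)·J (viewed as a complex matrix) satisfies |λ| < 1. -/
/-- The `N × N` all-ones matrix. -/
def onesMatrix (N : ℕ) : Matrix (Fin N) (Fin N) ℝ :=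
  Matrix.of fun _ _ => 1

lemma row_sum_pow (N : ℕ) (C : Matrix (Fin N) (Fin N) ℝ)
    (hCrow : ∀ l, ∑ k, C l k = 1) (m : ℕ) : ∀ l, ∑ k, (C ^ m) l k = 1 := by
  induction m with
  | zero => intro l; simp [Matrix.one_apply]
  | succ n ih =>
    intro l
    rw [pow_succ]
    simp only [Matrix.mul_apply]
    rw [Finset.sum_comm]
    have : ∀ j ∈ Finset.univ, ∑ k, (C ^ n) l j * C j k = (C ^ n) l j := by
      intro j _
      rw [← Finset.mul_sum, hCrow j, mul_one]
    rw [Finset.sum_congr rfl this, ih l]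

/-- **Lemma 1, spectral form.** If `C` is doubly stochastic and primitive, then
every complex eigenvalue of `C − (1/N)·J` has modulus strictly less than `1`. -/
theorem disagreement_matrix_spectral_radius_lt_one
    (N : ℕ) (hN : 1 ≤ N) (C : Matrix (Fin N) (Fin N) ℝ)
    (hCnn : ∀ l k, 0 ≤ C l k)
    (hCrow : ∀ l, ∑ k, C l k = 1)
    (hCcol : ∀ k, ∑ l, C l k = 1)
    (hPrim : ∃ m, 1 ≤ m ∧ ∀ k l, 0 < (C ^ m) k l)
    (lam : ℂ)
    (hlam : lam ∈ spectrum ℂ ((C - (N : ℝ)⁻¹ • onesMatrix N).map (Complex.ofReal ·))) :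
    ‖lam‖ < 1 := by
  by_cases hl0 : lam = 0
  · simp [hl0]
  have hNR : (0 : ℝ) < N := by exact_mod_cast Nat.lt_of_lt_of_le Nat.zero_lt_one hN
  set B : Matrix (Fin N) (Fin N) ℂ :=
    (C - (N : ℝ)⁻¹ • onesMatrix N).map (Complex.ofReal ·) with hB
  -- extract eigenvector
  rw [← AlgEquiv.spectrum_eq (Matrix.toLinAlgEquiv' (R := ℂ) (n := Fin N)) B,
      ← Module.End.hasEigenvalue_iff_mem_spectrum] at hlam
  obtain ⟨v, hv⟩ := hlam.exists_hasEigenvector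
  have hvne : v ≠ 0 := hv.2
  have hmul : B.mulVec v = lam • v := by
    have := hv.apply_eq_smul
    rwa [Matrix.toLinAlgEquiv'_apply] at this
  -- entrywise formula for B
  have hBapp : ∀ i k, B i k = ((C i k - (N : ℝ)⁻¹ : ℝ) : ℂ) := by
    intro i k
    simp [hB, Matrix.map_apply, Matrix.sub_apply, Matrix.smul_apply, onesMatrix]
  -- column sums of B are zero
  have hcolB : ∀ k, ∑ i, B i k = 0 := by
    intro k
    have : ∑ i, B i k = (((∑ i, C i k) - N * (N : ℝ)⁻¹ : ℝ) : ℂ) := by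
      simp only [hBapp]
      push_cast
      rw [Finset.sum_sub_distrib]
      simp [mul_comm]
    rw [this, hCcol k, mul_inv_cancel₀ (ne_of_gt hNR)]
    simp
  -- sum of eigenvector entries is zero
  have hsum : ∑ k, v k = 0 := by
    have h1 : ∑ i, (B.mulVec v) i = 0 := by
      simp only [Matrix.mulVec, dotProduct]
      rw [Finset.sum_comm]
      have : ∀ k ∈ Finset.univ, ∑ i, B i k * v k = 0 := by
        intro k _
        rw [← Finset.sum_mul, hcolB k, zero_mul]
      rw [Finset.sum_congr rfl this, Finset.sum_const_zero]
    rw [hmul] at h1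
    have h2 : lam * ∑ k, v k = 0 := by
      rw [Finset.mul_sum]; simpa using h1
    rcases mul_eq_zero.mp h2 with h | h
    · exact absurd h hl0
    · exact h
  -- C acts on v as lam
  have hCv : (C.map (Complex.ofReal ·)).mulVec v = lam • v := by
    ext i
    rw [← hmul]
    simp only [Matrix.mulVec, dotProduct, Matrix.map_apply, hBapp]
    push_cast
    simp only [sub_mul]
    rw [Finset.sum_sub_distrib, ← Finset.mul_sum, hsum, mul_zero, sub_zero]
  -- powers
  obtain ⟨m, hm1, hmpos⟩ := hPrim
  have hpow : ∀ n : ℕ, ((C ^ n).map (Complex.ofReal ·)).mulVec v = lam ^ n • v := by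
    intro n
    induction n with
    | zero => simp [Matrix.one_apply]
    | succ n ih =>
      have hmap : ((C ^ (n+1)).map (Complex.ofReal ·))
          = (C.map (Complex.ofReal ·)) * ((C ^ n).map (Complex.ofReal ·)) := by
        have h1 : ∀ (D : Matrix (Fin N) (Fin N) ℝ),
            D.map (Complex.ofReal ·) = Complex.ofRealHom.mapMatrix D := by
          intro D; rfl
        rw [h1, h1, h1, pow_succ']
        rw [map_mul]
      rw [hmap, ← Matrix.mulVec_mulVec, ih, Matrix.mulVec_smul, hCv, pow_succ', mul_smul]
      rw [smul_smul, smul_smul, mul_comm]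
  set A := C ^ m with hA
  have hArow : ∀ l, ∑ k, A l k = 1 := row_sum_pow N C hCrow m
  -- minimum entry
  have hne : (Finset.univ : Finset (Fin N × Fin N)).Nonempty := by
    have : Nonempty (Fin N) := ⟨⟨0, hN⟩⟩
    exact Finset.univ_nonempty
  set ε : ℝ := Finset.univ.inf' hne (fun p : Fin N × Fin N => A p.1 p.2) with hε
  have hεle : ∀ i k, ε ≤ A i k := fun i k =>
    Finset.inf'_le _ (Finset.mem_univ (i, k))
  have hεpos : 0 < ε := by
    obtain ⟨p, _, hp⟩ := Finset.exists_mem_eq_inf' hne (fun p : Fin N × Fin N => A p.1 p.2)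
    rw [hε, hp]
    exact hmpos p.1 p.2
  -- maximum modulus
  have hneF : (Finset.univ : Finset (Fin N)).Nonempty := ⟨⟨0, hN⟩, Finset.mem_univ _⟩
  set M : ℝ := Finset.univ.sup' hneF (fun k => ‖v k‖) with hM
  have hMle : ∀ k, ‖v k‖ ≤ M := fun k => by
    rw [hM]; exact Finset.le_sup' (fun k => ‖v k‖) (Finset.mem_univ k)
  obtain ⟨i0, _, hi0⟩ := Finset.exists_mem_eq_sup' hneF (fun k => ‖v k‖)
  have hMpos : 0 < M := by
    obtain ⟨k, hk⟩ := Function.ne_iff.mp hvne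
    calc (0:ℝ) < ‖v k‖ := by simpa using hk
    _ ≤ M := hMle k
  -- key estimate
  have hkey : ‖lam‖ ^ m * M ≤ (1 - N * ε) * M := by
    have heig : ((A.map (Complex.ofReal ·)).mulVec v) i0 = lam ^ m • v i0 := by
      rw [hpow m]; rfl
    have hlhs : ‖((A.map (Complex.ofReal ·)).mulVec v) i0‖
        = ‖lam‖ ^ m * M := by
      rw [heig]
      simp [hM, hi0, norm_smul, norm_pow]
    rw [← hlhs]
    have hrw : ((A.map (Complex.ofReal ·)).mulVec v) i0
        = ∑ k, ((A i0 k - ε : ℝ) : ℂ) * v k := by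
      simp only [Matrix.mulVec, dotProduct, Matrix.map_apply]
      push_cast
      simp only [sub_mul]
      rw [Finset.sum_sub_distrib, ← Finset.mul_sum, hsum, mul_zero, sub_zero]
    rw [hrw]
    calc ‖∑ k, ((A i0 k - ε : ℝ) : ℂ) * v k‖
        ≤ ∑ k, ‖((A i0 k - ε : ℝ) : ℂ) * v k‖ := by
          exact norm_sum_le _ _
      _ = ∑ k, (A i0 k - ε) * ‖v k‖ := by
          apply Finset.sum_congr rfl
          intro k _
          rw [norm_mul, Complex.norm_real, Real.norm_eq_abs, abs_of_nonneg (by linarith [hεle i0 k])]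
      _ ≤ ∑ k, (A i0 k - ε) * M := by
          apply Finset.sum_le_sum
          intro k _
          exact mul_le_mul_of_nonneg_left (hMle k) (by linarith [hεle i0 k])
      _ = (1 - N * ε) * M := by
          rw [← Finset.sum_mul, Finset.sum_sub_distrib, hArow i0]
          simp [Finset.card_univ, mul_comm]
  have hfin : ‖lam‖ ^ m ≤ 1 - N * ε :=
    le_of_mul_le_mul_right hkey hMpos
  by_contra hcon
  push_neg at hcon
  have h1 : (1:ℝ) ≤ ‖lam‖ ^ m := one_le_pow₀ hcon
  have h2 : 0 < (N : ℝ) * ε := mul_pos hNR hεpos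
  linarith
end

section
/- Let (Ω, 𝒢, ℙ) be a probability space with a filtration (ℱ_i)_{i∈ℕ}, let M ≥ 1, and let (X_{i+1})_{i∈ℕ} be ℝ^M-valued random vectors with X_{i+1} ℱ_{i+1}-measurable and square-integrable, and (Y_i)_{i∈ℕ} be ℝ^M-valued random vectors with Y_i ℱ_i-measurable and sup_i ‖Y_i(ω)‖ < ∞ for almost every ω. Suppose there is a constant L > 0 with E[‖X_{i+1}‖² | ℱ_i] ≤ L(1 + ‖Y_i‖²) almost surely for every i, and let (α_i)_{i≥1} be positive reals with Σ_i α_i² < ∞. Then Σ_i α_{i+1}² ‖X_{i+1}‖² < ∞ almost surely; in particular α_{i+1} · X_{i+1} → 0 almost surely as i → ∞. -/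
open MeasureTheory Filter

/-- **noise averaging.** Under a conditional second-moment bound driven by an
almost surely bounded adapted sequence, and square-summable step sizes, the step-size-weighted
squared noise norms are almost surely summable, and in particular the step-size-weighted noise
vanishes almost surely. -/
theorem stepsize_weighted_noise_vanishes
    {Ω : Type*} {mΩ : MeasurableSpace Ω} (ℙ : Measure Ω) [IsProbabilityMeasure ℙ]
    (ℱ : Filtration ℕ mΩ) (M : ℕ) (hM : 1 ≤ M)
    (X : ℕ → Ω → EuclideanSpace ℝ (Fin M))
    (hXmeas : ∀ i, StronglyMeasurable[ℱ (i + 1)] (X (i + 1)))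
    (hXsq : ∀ i, MemLp (X (i + 1)) 2 ℙ)
    (Y : ℕ → Ω → EuclideanSpace ℝ (Fin M))
    (hYmeas : ∀ i, StronglyMeasurable[ℱ i] (Y i))
    (hYbdd : ∀ᵐ ω ∂ℙ, ∃ B : ℝ, ∀ i, ‖Y i ω‖ ≤ B)
    (L : ℝ) (hL : 0 < L)
    (hcond : ∀ i, ∀ᵐ ω ∂ℙ,
      (ℙ[fun ω' => ‖X (i + 1) ω'‖ ^ 2|ℱ i]) ω ≤ L * (1 + ‖Y i ω‖ ^ 2))
    (α : ℕ → ℝ) (hαpos : ∀ i, 1 ≤ i → 0 < α i)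
    (hαsq : Summable fun i => (α i) ^ 2) :
    (∀ᵐ ω ∂ℙ, Summable fun i => (α (i + 1)) ^ 2 * ‖X (i + 1) ω‖ ^ 2) ∧
    (∀ᵐ ω ∂ℙ, Tendsto (fun i => α (i + 1) • X (i + 1) ω) atTop (nhds 0)) := by
  have hm : ∀ i, ℱ i ≤ mΩ := fun i => ℱ.le i
  -- integrability of squared norms
  have hXint : ∀ i, Integrable (fun ω => ‖X (i + 1) ω‖ ^ 2) ℙ := fun i =>
    (hXsq i).norm.integrable_sq
  -- truncation sets
  set s : ℕ → ℕ → Set Ω := fun K i => {ω | ∀ j ≤ i, ‖Y j ω‖ ≤ (K : ℝ)} with hs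
  have hsmeas : ∀ K i, MeasurableSet[ℱ i] (s K i) := by
    intro K i
    have hEq : s K i = ⋂ j ∈ Set.Iic i, {ω | ‖Y j ω‖ ≤ (K : ℝ)} := by
      ext ω; simp [hs, Set.mem_iInter]
    rw [hEq]
    refine MeasurableSet.biInter (Set.Iic i).to_countable (fun j hj => ?_)
    have hmeasYj : StronglyMeasurable[ℱ i] (Y j) := (hYmeas j).mono (ℱ.mono hj)
    have hnm : Measurable[ℱ i] fun ω => ‖Y j ω‖ := hmeasYj.norm.measurable
    exact hnm measurableSet_Iic
  -- the key integral bound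
  have key : ∀ K i, ∫ ω in s K i, ‖X (i + 1) ω‖ ^ 2 ∂ℙ ≤ L * (1 + (K : ℝ) ^ 2) := by
    intro K i
    have hms : MeasurableSet (s K i) := hm i _ (hsmeas K i)
    rw [← setIntegral_condExp (hm i) (hXint i) (hsmeas K i)]
    have hle : ∀ᵐ ω ∂(ℙ.restrict (s K i)),
        (ℙ[fun ω' => ‖X (i + 1) ω'‖ ^ 2|ℱ i]) ω ≤ L * (1 + (K : ℝ) ^ 2) := by
      filter_upwards [ae_restrict_of_ae (hcond i), ae_restrict_mem hms] with ω h1 h2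
      refine h1.trans ?_
      have hYK : ‖Y i ω‖ ≤ (K : ℝ) := h2 i le_rfl
      have : ‖Y i ω‖ ^ 2 ≤ (K : ℝ) ^ 2 := by
        have := norm_nonneg (Y i ω)
        nlinarith
      nlinarith [hL.le]
    calc ∫ ω in s K i, (ℙ[fun ω' => ‖X (i + 1) ω'‖ ^ 2|ℱ i]) ω ∂ℙ
        ≤ ∫ _ω in s K i, L * (1 + (K : ℝ) ^ 2) ∂ℙ := by
          refine integral_mono_ae (integrable_condExp.restrict)
            (integrable_const _) hle
      _ = (ℙ (s K i)).toReal * (L * (1 + (K : ℝ) ^ 2)) := by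
          simp [Measure.restrict_apply_univ, Measure.real]
      _ ≤ 1 * (L * (1 + (K : ℝ) ^ 2)) := by
          have h1 : (ℙ (s K i)).toReal ≤ 1 := by
            have := prob_le_one (μ := ℙ) (s := s K i)
            simpa using ENNReal.toReal_mono (by simp) this
          have hC : 0 ≤ L * (1 + (K : ℝ) ^ 2) := by positivity
          exact mul_le_mul_of_nonneg_right h1 hC
      _ = L * (1 + (K : ℝ) ^ 2) := one_mul _
  -- the ENNReal-valued truncated terms
  set F : ℕ → ℕ → Ω → ENNReal := fun K i =>
    (s K i).indicator (fun ω => ENNReal.ofReal ((α (i + 1)) ^ 2 * ‖X (i + 1) ω‖ ^ 2)) with hF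
  have hFmeas : ∀ K i, AEMeasurable (F K i) ℙ := by
    intro K i
    have hms : MeasurableSet (s K i) := hm i _ (hsmeas K i)
    have hXm : Measurable (X (i + 1)) := ((hXmeas i).mono (hm (i + 1))).measurable
    exact ((measurable_const.mul (hXm.norm.pow measurable_const)).ennreal_ofReal.indicator
      hms).aemeasurable
  have hFlint : ∀ K i, ∫⁻ ω, F K i ω ∂ℙ ≤
      ENNReal.ofReal ((α (i + 1)) ^ 2 * (L * (1 + (K : ℝ) ^ 2))) := by
    intro K i
    have hms : MeasurableSet (s K i) := hm i _ (hsmeas K i)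
    rw [hF]
    rw [lintegral_indicator hms]
    have hrw : ∀ ω, ENNReal.ofReal ((α (i + 1)) ^ 2 * ‖X (i + 1) ω‖ ^ 2)
        = ENNReal.ofReal ((α (i + 1)) ^ 2) * ENNReal.ofReal (‖X (i + 1) ω‖ ^ 2) := by
      intro ω; rw [ENNReal.ofReal_mul (by positivity)]
    simp_rw [hrw]
    rw [lintegral_const_mul' _ _ ENNReal.ofReal_ne_top]
    have hofint : ∫⁻ ω in s K i, ENNReal.ofReal (‖X (i + 1) ω‖ ^ 2) ∂ℙ
        = ENNReal.ofReal (∫ ω in s K i, ‖X (i + 1) ω‖ ^ 2 ∂ℙ) := by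
      rw [ofReal_integral_eq_lintegral_ofReal ((hXint i).restrict)
        (Filter.Eventually.of_forall fun ω => by positivity)]
    rw [hofint, ← ENNReal.ofReal_mul (by positivity)]
    exact ENNReal.ofReal_le_ofReal
      (mul_le_mul_of_nonneg_left (key K i) (by positivity))
  -- summability of the bounds
  have hαsq' : Summable fun i => (α (i + 1)) ^ 2 :=
    hαsq.comp_injective (fun a b h => by omega)
  have htsum : ∀ K, ∑' i, ∫⁻ ω, F K i ω ∂ℙ ≠ ⊤ := by
    intro K
    have hsb : Summable fun i => (α (i + 1)) ^ 2 * (L * (1 + (K : ℝ) ^ 2)) :=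
      hαsq'.mul_right _
    have hle : ∑' i, ∫⁻ ω, F K i ω ∂ℙ
        ≤ ∑' i, ENNReal.ofReal ((α (i + 1)) ^ 2 * (L * (1 + (K : ℝ) ^ 2))) :=
      ENNReal.tsum_le_tsum (fun i => hFlint K i)
    have hfin : (∑' i, ENNReal.ofReal ((α (i + 1)) ^ 2 * (L * (1 + (K : ℝ) ^ 2)))) ≠ ⊤ := by
      rw [← ENNReal.ofReal_tsum_of_nonneg (fun i => by positivity) hsb]
      exact ENNReal.ofReal_ne_top
    exact fun h => hfin (top_le_iff.mp (h ▸ hle))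
  -- a.e. finiteness of the truncated sums, for every K
  have hae : ∀ᵐ ω ∂ℙ, ∀ K : ℕ, ∑' i, F K i ω < ⊤ := by
    rw [ae_all_iff]
    intro K
    refine ae_lt_top' (AEMeasurable.ennreal_tsum (fun i => hFmeas K i)) ?_
    rw [lintegral_tsum (fun i => hFmeas K i)]
    exact htsum K
  constructor
  · -- summability
    filter_upwards [hae, hYbdd] with ω hω hB
    obtain ⟨B, hBle⟩ := hB
    set K : ℕ := ⌈B⌉₊ with hK
    have hmem : ∀ i, ω ∈ s K i := by
      intro i j hj
      exact (hBle j).trans (Nat.le_ceil B)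
    have hFeq : ∀ i, F K i ω = ENNReal.ofReal ((α (i + 1)) ^ 2 * ‖X (i + 1) ω‖ ^ 2) := by
      intro i; rw [hF]; exact Set.indicator_of_mem (hmem i) _
    have hfin : ∑' i, F K i ω ≠ ⊤ := (hω K).ne
    have hsummable : Summable fun i => (F K i ω).toReal := ENNReal.summable_toReal hfin
    refine hsummable.congr fun i => ?_
    rw [hFeq i, ENNReal.toReal_ofReal (by positivity)]
  · -- convergence to 0
    filter_upwards [hae, hYbdd] with ω hω hB
    have hsummable : Summable fun i => (α (i + 1)) ^ 2 * ‖X (i + 1) ω‖ ^ 2 := by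
      obtain ⟨B, hBle⟩ := hB
      set K : ℕ := ⌈B⌉₊ with hK
      have hmem : ∀ i, ω ∈ s K i := fun i j hj => (hBle j).trans (Nat.le_ceil B)
      have hFeq : ∀ i, F K i ω = ENNReal.ofReal ((α (i + 1)) ^ 2 * ‖X (i + 1) ω‖ ^ 2) := by
        intro i; rw [hF]; exact Set.indicator_of_mem (hmem i) _
      have hsummable := ENNReal.summable_toReal (hω K).ne
      refine hsummable.congr fun i => ?_
      rw [hFeq i, ENNReal.toReal_ofReal (by positivity)]
    have hsq0 : Tendsto (fun i => (α (i + 1)) ^ 2 * ‖X (i + 1) ω‖ ^ 2) atTop (nhds 0) :=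
      hsummable.tendsto_atTop_zero
    have hnorm0 : Tendsto (fun i => ‖α (i + 1) • X (i + 1) ω‖) atTop (nhds 0) := by
      have hcomp : Tendsto (fun i => Real.sqrt ((α (i + 1)) ^ 2 * ‖X (i + 1) ω‖ ^ 2))
          atTop (nhds 0) := by
        have h := (Real.continuous_sqrt.tendsto 0).comp hsq0
        rw [Real.sqrt_zero] at h
        exact h
      refine hcomp.congr fun i => ?_
      rw [← mul_pow, Real.sqrt_sq_eq_abs, abs_mul, abs_norm, norm_smul]
      simp [Real.norm_eq_abs]
    exact tendsto_zero_iff_norm_tendsto_zero.mpr hnorm0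
end
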